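/- arXiv:0802.2198 — 5 statements merged into one kernel-verified Lean document; each statement's English description precedes it below -/
import Mathlib

section
/- Suppose C is even under γ and BRST-compatible with s. Then for every n ≥ 1 and every n-multilinear-map-valued function f_n on M_n that is either even or odd with respect to γ, the operators B and b graded-anticommute: (B(b f_n))(x_1,…,x_{n+1}) + (b(B f_n))(x_1,…,x_{n+1}) = 0 for all (x_1,…,x_{n+1}) ∈ M_{n+1}, where b f_n is computed with the even or odd formula according to the parity of f_n, and b(B f_n) with the formula for the opposite parity (since B reverses parity). -/
noncomputable section

abbrev Pt (D : ℕ) : Type := EuclideanSpace ℝ (Fin D)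

variable {D : ℕ} {V : Type*} [AddCommGroup V] [Module ℂ V]

/-- The chain condition defining the domain `F_m`. -/
def InChain {m : ℕ} (x : Fin m → Pt D) : Prop :=
  ∀ (i : ℕ) (hi : i + 1 < m),
    dist (x ⟨0, by omega⟩) (x ⟨i, by omega⟩) < dist (x ⟨i, by omega⟩) (x ⟨i + 1, hi⟩) ∧
    ∀ (j : ℕ) (hj : j + 1 ≤ i),
      dist (x ⟨j + 1, by omega⟩) (x ⟨i + 1, hi⟩) < dist (x ⟨j, by omega⟩) (x ⟨i + 1, hi⟩)

def IsBilin (C : Pt D → Pt D → V → V → V) : Prop :=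
  ∀ x y : Pt D, (∀ w : V, IsLinearMap ℂ fun u => C x y u w) ∧ (∀ u : V, IsLinearMap ℂ (C x y u))

def AssocF3 (C : Pt D → Pt D → V → V → V) : Prop :=
  ∀ x₁ x₂ x₃ : Pt D, dist x₁ x₂ < dist x₂ x₃ → dist x₂ x₃ < dist x₁ x₃ →
    ∀ u v w : V, C x₂ x₃ (C x₁ x₂ u v) w = C x₁ x₃ u (C x₂ x₃ v w)

def IsMulti {n : ℕ} (f : (Fin n → Pt D) → (Fin n → V) → V) : Prop :=
  ∀ (x : Fin n → Pt D) (v : Fin n → V) (i : Fin n),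
    IsLinearMap ℂ fun u => f x (Function.update v i u)

/-- The Hochschild-type coboundary `b` (even version). -/
def cobE (C : Pt D → Pt D → V → V → V) {n : ℕ}
    (f : (Fin n → Pt D) → (Fin n → V) → V) :
    (Fin (n + 1) → Pt D) → (Fin (n + 1) → V) → V :=
  fun x v =>
    C (x 0) (x (Fin.last n)) (v 0) (f (fun j => x j.succ) fun j => v j.succ)
      + (∑ k : Fin n, ((-1 : ℂ) ^ ((k : ℕ) + 1)) •
          f (fun j => x (k.castSucc.succAbove j)) fun j =>
            if (j : ℕ) < (k : ℕ) then v j.castSucc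
            else if j = k then C (x k.castSucc) (x k.succ) (v k.castSucc) (v k.succ)
            else v j.succ)
      + ((-1 : ℂ) ^ (n + 1)) •
          C (x ⟨n - 1, by omega⟩) (x (Fin.last n))
            (f (fun j => x j.castSucc) fun j => v j.castSucc) (v (Fin.last n))

def gConj (γ : V → V) {n : ℕ} (f : (Fin n → Pt D) → (Fin n → V) → V) :
    (Fin n → Pt D) → (Fin n → V) → V :=
  fun x v => γ (f x fun j => γ (v j))

def IsEvenC (γ : V → V) {n : ℕ} (f : (Fin n → Pt D) → (Fin n → V) → V) : Prop :=
  ∀ x v, gConj γ f x v = f x v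

def IsOddC (γ : V → V) {n : ℕ} (f : (Fin n → Pt D) → (Fin n → V) → V) : Prop :=
  ∀ x v, gConj γ f x v = - f x v

/-- The BRST coboundary `B`. -/
def Bop (γ s : V → V) {n : ℕ} (f : (Fin n → Pt D) → (Fin n → V) → V) :
    (Fin n → Pt D) → (Fin n → V) → V :=
  fun x v =>
    s (f x v) - ∑ i : Fin n, gConj γ f x fun j =>
      if (j : ℕ) < (i : ℕ) then γ (v j) else if j = i then s (v j) else v j

/-- The Hochschild-type coboundary `b` (odd version). -/
def cobO (C : Pt D → Pt D → V → V → V) (γ : V → V) {n : ℕ}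
    (f : (Fin n → Pt D) → (Fin n → V) → V) :
    (Fin (n + 1) → Pt D) → (Fin (n + 1) → V) → V :=
  fun x v =>
    -C (x 0) (x (Fin.last n)) (γ (v 0)) (f (fun j => x j.succ) fun j => v j.succ)
      - (∑ k : Fin n, ((-1 : ℂ) ^ ((k : ℕ) + 1)) •
          f (fun j => x (k.castSucc.succAbove j)) fun j =>
            if (j : ℕ) < (k : ℕ) then v j.castSucc
            else if j = k then C (x k.castSucc) (x k.succ) (v k.castSucc) (v k.succ)
            else v j.succ)
      - ((-1 : ℂ) ^ (n + 1)) •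
          C (x ⟨n - 1, by omega⟩) (x (Fin.last n))
            (f (fun j => x j.castSucc) fun j => v j.castSucc) (v (Fin.last n))

def toC2 (Cj : Pt D → Pt D → V → V → V) : (Fin 2 → Pt D) → (Fin 2 → V) → V :=
  fun x v => Cj (x 0) (x 1) (v 0) (v 1)

def oneC (t : V → V) : (Fin 1 → Pt D) → (Fin 1 → V) → V := fun _ v => t (v 0)

set_option linter.unusedSectionVars false
set_option maxHeartbeats 1000000
namespace SA

variable {D : ℕ} {V : Type*} [AddCommGroup V] [Module ℂ V]

def Wm (γ s : V → V) {m : ℕ} (v : Fin m → V) (i : Fin m) : Fin m → V :=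
  fun j => if (j : ℕ) < (i : ℕ) then γ (v j) else if j = i then s (v j) else v j

def Qa (C : Pt D → Pt D → V → V → V) {n : ℕ} (x : Fin (n + 1) → Pt D)
    (v : Fin (n + 1) → V) (k : Fin n) : Fin n → V :=
  fun j => if (j : ℕ) < (k : ℕ) then v j.castSucc
    else if j = k then C (x k.castSucc) (x k.succ) (v k.castSucc) (v k.succ)
    else v j.succ

def tl {m : ℕ} (v : Fin (m + 1) → V) : Fin m → V := fun j => v j.succ
def fr {m : ℕ} (v : Fin (m + 1) → V) : Fin m → V := fun j => v j.castSucc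

def QB (γ : V → V) {n : ℕ} (v : Fin (n + 1) → V) (k : Fin n) : Fin n → V :=
  fun m => if (m : ℕ) < (k : ℕ) then γ (v m.castSucc) else if m = k then 0 else v m.succ

variable (γ s : V → V) (C : Pt D → Pt D → V → V → V) {n : ℕ}
  (x : Fin (n + 1) → Pt D) (v : Fin (n + 1) → V)

lemma Wm_Qa_lt {j k : Fin n} (h : (j : ℕ) < (k : ℕ)) :
    Wm γ s (Qa C x v k) j = Qa C x (Wm γ s v j.castSucc) k := by
  funext m
  simp only [Wm, Qa, Fin.coe_castSucc, Fin.val_succ, Fin.ext_iff]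
  split_ifs <;> first | rfl | omega

lemma Wm_Qa_gt {j k : Fin n}
    (hCg : ∀ a b, γ (C (x k.castSucc) (x k.succ) a b) = C (x k.castSucc) (x k.succ) (γ a) (γ b))
    (h : (k : ℕ) < (j : ℕ)) :
    Wm γ s (Qa C x v k) j = Qa C x (Wm γ s v j.succ) k := by
  funext m
  simp only [Wm, Qa, Fin.coe_castSucc, Fin.val_succ, Fin.ext_iff]
  split_ifs <;> first | rfl | omega | (exact hCg _ _)

lemma Wm_Qa_eq (k : Fin n) :
    Wm γ s (Qa C x v k) k =
      Function.update (QB γ v k) k (s (C (x k.castSucc) (x k.succ) (v k.castSucc) (v k.succ))) := by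
  funext m
  simp only [Wm, Qa, QB, Function.update_apply, Fin.coe_castSucc, Fin.val_succ, Fin.ext_iff]
  split_ifs <;> first | rfl | omega

lemma Qa_Wm_castSucc (k : Fin n) :
    Qa C x (Wm γ s v k.castSucc) k =
      Function.update (QB γ v k) k (C (x k.castSucc) (x k.succ) (s (v k.castSucc)) (v k.succ)) := by
  funext m
  simp only [Wm, Qa, QB, Function.update_apply, Fin.coe_castSucc, Fin.val_succ, Fin.ext_iff]
  split_ifs <;> first | rfl | omega

lemma Qa_Wm_succ (k : Fin n) :
    Qa C x (Wm γ s v k.succ) k =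
      Function.update (QB γ v k) k (C (x k.castSucc) (x k.succ) (γ (v k.castSucc)) (s (v k.succ))) := by
  funext m
  simp only [Wm, Qa, QB, Function.update_apply, Fin.coe_castSucc, Fin.val_succ, Fin.ext_iff]
  split_ifs <;> first | rfl | omega

lemma Qa_gamma (k : Fin n)
    (hCg : ∀ a b, γ (C (x k.castSucc) (x k.succ) a b) = C (x k.castSucc) (x k.succ) (γ a) (γ b)) :
    Qa C x (fun j => γ (v j)) k = fun m => γ (Qa C x v k m) := by
  funext m
  simp only [Qa]
  split_ifs <;> first | rfl | (exact (hCg _ _).symm)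


lemma Wm_zero_zero {m : ℕ} (v : Fin (m + 1) → V) : Wm γ s v 0 0 = s (v 0) := by
  simp [Wm]

lemma Wm_succ_zero {m : ℕ} (v : Fin (m + 1) → V) (j : Fin m) :
    Wm γ s v j.succ 0 = γ (v 0) := by
  simp [Wm]

lemma tl_Wm_zero {m : ℕ} (v : Fin (m + 1) → V) : tl (Wm γ s v 0) = tl v := by
  funext j
  simp [Wm, tl, Fin.succ_ne_zero]

lemma tl_Wm_succ {m : ℕ} (v : Fin (m + 1) → V) (j : Fin m) :
    tl (Wm γ s v j.succ) = Wm γ s (tl v) j := by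
  funext m'
  simp only [Wm, tl, Fin.val_succ, add_lt_add_iff_right, Fin.succ_inj]

lemma fr_Wm_castSucc {m : ℕ} (v : Fin (m + 1) → V) (j : Fin m) :
    fr (Wm γ s v j.castSucc) = Wm γ s (fr v) j := by
  funext m'
  simp only [Wm, fr, Fin.coe_castSucc, Fin.castSucc_inj]

lemma fr_Wm_last {m : ℕ} (v : Fin (m + 1) → V) :
    fr (Wm γ s v (Fin.last m)) = fun j => γ (fr v j) := by
  funext j
  simp only [Wm, fr, Fin.val_last, Fin.coe_castSucc]
  rw [if_pos j.isLt]

lemma Wm_castSucc_last {m : ℕ} (v : Fin (m + 1) → V) (j : Fin m) :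
    Wm γ s v j.castSucc (Fin.last m) = v (Fin.last m) := by
  have h1 : ¬ ((Fin.last m : ℕ) < (j.castSucc : ℕ)) := by
    simp only [Fin.val_last, Fin.coe_castSucc]
    omega
  have h2 : Fin.last m ≠ j.castSucc := by
    intro h
    have := congrArg Fin.val h
    simp only [Fin.val_last, Fin.coe_castSucc] at this
    omega
  simp [Wm, h1, h2]

lemma Wm_last_last {m : ℕ} (v : Fin (m + 1) → V) :
    Wm γ s v (Fin.last m) (Fin.last m) = s (v (Fin.last m)) := by
  simp [Wm]


lemma Psum (f : (Fin n → Pt D) → (Fin n → V) → V) (X : Fin n → Pt D) (P : V → V → V) :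
    ∑ i : Fin (n + 1), P (Wm γ s v i 0) (f X (tl (Wm γ s v i))) =
      P (s (v 0)) (f X (tl v)) + ∑ j : Fin n, P (γ (v 0)) (f X (Wm γ s (tl v) j)) := by
  rw [Fin.sum_univ_succ, Wm_zero_zero, tl_Wm_zero]
  congr 1
  exact Finset.sum_congr rfl fun j _ => by rw [Wm_succ_zero, tl_Wm_succ]

lemma Rsum (f : (Fin n → Pt D) → (Fin n → V) → V) (X : Fin n → Pt D) (P : V → V → V) :
    ∑ i : Fin (n + 1), P (f X (fr (Wm γ s v i))) (Wm γ s v i (Fin.last n)) =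
      (∑ j : Fin n, P (f X (Wm γ s (fr v) j)) (v (Fin.last n)))
        + P (f X (fun m => γ (fr v m))) (s (v (Fin.last n))) := by
  rw [Fin.sum_univ_castSucc, fr_Wm_last, Wm_last_last]
  congr 1
  exact Finset.sum_congr rfl fun j _ => by rw [fr_Wm_castSucc, Wm_castSucc_last]

lemma Qsum (f : (Fin n → Pt D) → (Fin n → V) → V) (hf : IsMulti f)
    (X : Fin n → Pt D) (k : Fin n)
    (hCg : ∀ a b, γ (C (x k.castSucc) (x k.succ) a b) = C (x k.castSucc) (x k.succ) (γ a) (γ b))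
    (hsC : ∀ a b, s (C (x k.castSucc) (x k.succ) a b) =
      C (x k.castSucc) (x k.succ) (s a) b + C (x k.castSucc) (x k.succ) (γ a) (s b)) :
    ∑ i : Fin (n + 1), f X (Qa C x (Wm γ s v i) k) =
      ∑ j : Fin n, f X (Wm γ s (Qa C x v k) j) := by
  rw [Fin.sum_univ_succAbove (fun i => f X (Qa C x (Wm γ s v i) k)) k.succ]
  have key : ∀ j : Fin n, f X (Wm γ s (Qa C x v k) j) =
      f X (Qa C x (Wm γ s v (k.succ.succAbove j)) k)
        + if j = k then f X (Qa C x (Wm γ s v k.succ) k) else 0 := by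
    intro j
    rcases lt_trichotomy (j : ℕ) (k : ℕ) with h | h | h
    · have hj : j ≠ k := fun e => by simp [e] at h
      rw [Fin.succAbove_of_castSucc_lt _ _ (by
        simp only [Fin.lt_def, Fin.coe_castSucc, Fin.val_succ]; omega),
        if_neg hj, add_zero, Wm_Qa_lt γ s C x v h]
    · have hj : j = k := Fin.ext h
      subst hj
      rw [if_pos rfl, Fin.succAbove_of_castSucc_lt _ _ (Fin.castSucc_lt_succ : j.castSucc < j.succ),
        Wm_Qa_eq, Qa_Wm_castSucc, Qa_Wm_succ, hsC]
      exact (hf X (QB γ v j) j).map_add _ _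
    · have hj : j ≠ k := fun e => by simp [e] at h
      rw [Fin.succAbove_of_le_castSucc _ _ (by
        simp only [Fin.le_def, Fin.coe_castSucc, Fin.val_succ]; omega),
        if_neg hj, add_zero, Wm_Qa_gt γ s C x v hCg h]
  rw [Finset.sum_congr rfl fun j _ => key j, Finset.sum_add_distrib,
    Finset.sum_ite_eq' Finset.univ k, if_pos (Finset.mem_univ k)]
  abel



lemma lin_sum (t : V → V) (ht : IsLinearMap ℂ t) {ι : Type*} (S : Finset ι) (g : ι → V) :
    t (∑ i ∈ S, g i) = ∑ i ∈ S, t (g i) :=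
  map_sum (IsLinearMap.mk' t ht) g S

lemma Bop_eq (γ s : V → V) {n : ℕ} (f : (Fin n → Pt D) → (Fin n → V) → V)
    (x : Fin n → Pt D) (v : Fin n → V) :
    Bop γ s f x v = s (f x v) - ∑ i : Fin n, gConj γ f x (Wm γ s v i) := rfl

lemma cobE_eq (C : Pt D → Pt D → V → V → V) {n : ℕ}
    (f : (Fin n → Pt D) → (Fin n → V) → V) (x : Fin (n + 1) → Pt D) (v : Fin (n + 1) → V) :
    cobE C f x v =
      C (x 0) (x (Fin.last n)) (v 0) (f (fun j => x j.succ) (tl v))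
      + (∑ k : Fin n, ((-1 : ℂ) ^ ((k : ℕ) + 1)) •
          f (fun j => x (k.castSucc.succAbove j)) (Qa C x v k))
      + ((-1 : ℂ) ^ (n + 1)) •
          C (x ⟨n - 1, by omega⟩) (x (Fin.last n))
            (f (fun j => x j.castSucc) (fr v)) (v (Fin.last n)) := rfl

lemma cobO_eq (C : Pt D → Pt D → V → V → V) (γ : V → V) {n : ℕ}
    (f : (Fin n → Pt D) → (Fin n → V) → V) (x : Fin (n + 1) → Pt D) (v : Fin (n + 1) → V) :
    cobO C γ f x v =
      -C (x 0) (x (Fin.last n)) (γ (v 0)) (f (fun j => x j.succ) (tl v))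
      - (∑ k : Fin n, ((-1 : ℂ) ^ ((k : ℕ) + 1)) •
          f (fun j => x (k.castSucc.succAbove j)) (Qa C x v k))
      - ((-1 : ℂ) ^ (n + 1)) •
          C (x ⟨n - 1, by omega⟩) (x (Fin.last n))
            (f (fun j => x j.castSucc) (fr v)) (v (Fin.last n)) := rfl

section Parity

variable {γ : V → V} {C : Pt D → Pt D → V → V → V} {n : ℕ} {x : Fin (n + 1) → Pt D}
  {f : (Fin n → Pt D) → (Fin n → V) → V}

lemma cobE_gconj (hγ : IsLinearMap ℂ γ) (hγγ : ∀ a, γ (γ a) = a) (hn : 1 ≤ n)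
    (hCg : ∀ i j : Fin (n + 1), i ≠ j → ∀ a b,
      γ (C (x i) (x j) a b) = C (x i) (x j) (γ a) (γ b))
    (hfe : ∀ (X : Fin n → Pt D) (u : Fin n → V), γ (f X fun j => γ (u j)) = f X u)
    (u : Fin (n + 1) → V) :
    gConj γ (cobE C f) x u = cobE C f x u := by
  have h0l : (0 : Fin (n + 1)) ≠ Fin.last n := by
    intro h; have := congrArg Fin.val h; simp [Fin.val_last] at this; omega
  have hml : (⟨n - 1, by omega⟩ : Fin (n + 1)) ≠ Fin.last n := by
    intro h; have := congrArg Fin.val h; simp [Fin.val_last] at this; omega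
  show γ (cobE C f x fun j => γ (u j)) = _
  rw [cobE_eq C f x (fun j => γ (u j)), cobE_eq C f x u]
  have htl : tl (fun j => γ (u j)) = (fun j => γ (tl u j)) := rfl
  have hfr : fr (fun j => γ (u j)) = (fun j => γ (fr u j)) := rfl
  rw [htl, hfr, hγ.map_add, hγ.map_add]
  have hA : γ (C (x 0) (x (Fin.last n)) (γ (u 0))
      (f (fun j => x j.succ) (fun j => γ (tl u j)))) =
      C (x 0) (x (Fin.last n)) (u 0) (f (fun j => x j.succ) (tl u)) := by
    rw [hCg 0 (Fin.last n) h0l, hγγ, hfe]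
  have hB : γ (∑ k : Fin n, ((-1 : ℂ) ^ ((k : ℕ) + 1)) •
        f (fun j => x (k.castSucc.succAbove j)) (Qa C x (fun j => γ (u j)) k)) =
      ∑ k : Fin n, ((-1 : ℂ) ^ ((k : ℕ) + 1)) •
        f (fun j => x (k.castSucc.succAbove j)) (Qa C x u k) := by
    rw [lin_sum γ hγ]
    refine Finset.sum_congr rfl fun k _ => ?_
    rw [Qa_gamma γ C x u k (hCg k.castSucc k.succ (Fin.castSucc_lt_succ : k.castSucc < k.succ).ne),
      hγ.map_smul, hfe]
  have hC : γ (((-1 : ℂ) ^ (n + 1)) • C (x ⟨n - 1, by omega⟩) (x (Fin.last n))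
      (f (fun j => x j.castSucc) (fun j => γ (fr u j))) (γ (u (Fin.last n)))) =
      ((-1 : ℂ) ^ (n + 1)) • C (x ⟨n - 1, by omega⟩) (x (Fin.last n))
      (f (fun j => x j.castSucc) (fr u)) (u (Fin.last n)) := by
    rw [hγ.map_smul, hCg _ _ hml, hγγ, hfe]
  rw [hA, hB, hC]

lemma cobO_gconj (hγ : IsLinearMap ℂ γ) (hγγ : ∀ a, γ (γ a) = a) (hn : 1 ≤ n)
    (hCg : ∀ i j : Fin (n + 1), i ≠ j → ∀ a b,
      γ (C (x i) (x j) a b) = C (x i) (x j) (γ a) (γ b))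
    (hCneg1 : ∀ i j : Fin (n + 1), ∀ a b, C (x i) (x j) (-a) b = -(C (x i) (x j) a b))
    (hCneg2 : ∀ i j : Fin (n + 1), ∀ a b, C (x i) (x j) a (-b) = -(C (x i) (x j) a b))
    (hfo : ∀ (X : Fin n → Pt D) (u : Fin n → V), γ (f X fun j => γ (u j)) = -(f X u))
    (u : Fin (n + 1) → V) :
    gConj γ (cobO C γ f) x u = -(cobO C γ f x u) := by
  have h0l : (0 : Fin (n + 1)) ≠ Fin.last n := by
    intro h; have := congrArg Fin.val h; simp [Fin.val_last] at this; omega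
  have hml : (⟨n - 1, by omega⟩ : Fin (n + 1)) ≠ Fin.last n := by
    intro h; have := congrArg Fin.val h; simp [Fin.val_last] at this; omega
  show γ (cobO C γ f x fun j => γ (u j)) = _
  rw [cobO_eq C γ f x (fun j => γ (u j)), cobO_eq C γ f x u]
  have htl : tl (fun j => γ (u j)) = (fun j => γ (tl u j)) := rfl
  have hfr : fr (fun j => γ (u j)) = (fun j => γ (fr u j)) := rfl
  rw [htl, hfr, hγ.map_sub, hγ.map_sub]
  have hA : γ (-C (x 0) (x (Fin.last n)) (γ (γ (u 0)))
      (f (fun j => x j.succ) (fun j => γ (tl u j)))) =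
      C (x 0) (x (Fin.last n)) (γ (u 0)) (f (fun j => x j.succ) (tl u)) := by
    rw [hγ.map_neg, hCg 0 (Fin.last n) h0l, hγγ, hfo, hCneg2, neg_neg]
  have hB : γ (∑ k : Fin n, ((-1 : ℂ) ^ ((k : ℕ) + 1)) •
        f (fun j => x (k.castSucc.succAbove j)) (Qa C x (fun j => γ (u j)) k)) =
      -∑ k : Fin n, ((-1 : ℂ) ^ ((k : ℕ) + 1)) •
        f (fun j => x (k.castSucc.succAbove j)) (Qa C x u k) := by
    rw [lin_sum γ hγ, ← Finset.sum_neg_distrib]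
    refine Finset.sum_congr rfl fun k _ => ?_
    rw [Qa_gamma γ C x u k (hCg k.castSucc k.succ (Fin.castSucc_lt_succ : k.castSucc < k.succ).ne),
      hγ.map_smul, hfo, smul_neg]
  have hC : γ (((-1 : ℂ) ^ (n + 1)) • C (x ⟨n - 1, by omega⟩) (x (Fin.last n))
      (f (fun j => x j.castSucc) (fun j => γ (fr u j))) (γ (u (Fin.last n)))) =
      -(((-1 : ℂ) ^ (n + 1)) • C (x ⟨n - 1, by omega⟩) (x (Fin.last n))
      (f (fun j => x j.castSucc) (fr u)) (u (Fin.last n))) := by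
    rw [hγ.map_smul, hCg _ _ hml, hγγ, hfo, hCneg1, smul_neg]
  rw [hA, hB, hC]
  abel

end Parity

end SA


/-- if `C` is even under `γ` and BRST-compatible with `s`, then `B` and `b`
graded-anticommute: `B(b f) + b(B f) = 0` on `M_{n+1}`, where `b f` is computed with the
formula matching the parity of `f`, and `b (B f)` with that of the opposite parity. -/
theorem stmt3 {D : ℕ} (hD : 1 ≤ D) {V : Type*} [AddCommGroup V] [Module ℂ V]
    (γ s : V → V) (hγ : IsLinearMap ℂ γ) (hs : IsLinearMap ℂ s)
    (hγγ : ∀ v : V, γ (γ v) = v) (hss : ∀ v : V, s (s v) = 0)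
    (hγs : ∀ v : V, γ (s v) + s (γ v) = 0)
    (C : Pt D → Pt D → V → V → V) (hbil : IsBilin C)
    (hCeven : ∀ x₁ x₂ : Pt D, x₁ ≠ x₂ → ∀ u w : V, γ (C x₁ x₂ (γ u) (γ w)) = C x₁ x₂ u w)
    (hBRST : ∀ x₁ x₂ : Pt D, x₁ ≠ x₂ → ∀ u w : V,
      s (C x₁ x₂ u w) = C x₁ x₂ (s u) w + C x₁ x₂ (γ u) (s w))
    (n : ℕ) (hn : 1 ≤ n)
    (f : (Fin n → Pt D) → (Fin n → V) → V) (hf : IsMulti f)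
    (hpar : IsEvenC γ f ∨ IsOddC γ f)
    (x : Fin (n + 1) → Pt D) (hx : Function.Injective x) (v : Fin (n + 1) → V) :
    (IsEvenC γ f → Bop γ s (cobE C f) x v + cobO C γ (Bop γ s f) x v = 0) ∧
    (IsOddC γ f → Bop γ s (cobO C γ f) x v + cobE C (Bop γ s f) x v = 0) := by

  clear hpar hD
  have h0l : (0 : Fin (n + 1)) ≠ Fin.last n := by
    intro h; have := congrArg Fin.val h; simp [Fin.val_last] at this; omega
  have hml : (⟨n - 1, by omega⟩ : Fin (n + 1)) ≠ Fin.last n := by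
    intro h; have := congrArg Fin.val h; simp [Fin.val_last] at this; omega
  have hCg : ∀ i j : Fin (n + 1), i ≠ j → ∀ a b : V,
      γ (C (x i) (x j) a b) = C (x i) (x j) (γ a) (γ b) := by
    intro i j hij a b
    have h := hCeven (x i) (x j) (hx.ne hij) (γ a) (γ b)
    rw [hγγ, hγγ] at h
    exact h
  have hsC : ∀ i j : Fin (n + 1), i ≠ j → ∀ a b : V,
      s (C (x i) (x j) a b) = C (x i) (x j) (s a) b + C (x i) (x j) (γ a) (s b) :=
    fun i j hij a b => hBRST (x i) (x j) (hx.ne hij) a b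
  have hCneg1 : ∀ (i j : Fin (n + 1)) (a b : V), C (x i) (x j) (-a) b = -C (x i) (x j) a b :=
    fun i j a b => ((hbil (x i) (x j)).1 b).map_neg a
  have hCneg2 : ∀ (i j : Fin (n + 1)) (a b : V), C (x i) (x j) a (-b) = -C (x i) (x j) a b :=
    fun i j a b => ((hbil (x i) (x j)).2 a).map_neg b
  have hCsub1 : ∀ (i j : Fin (n + 1)) (a a' b : V),
      C (x i) (x j) (a - a') b = C (x i) (x j) a b - C (x i) (x j) a' b :=
    fun i j a a' b => ((hbil (x i) (x j)).1 b).map_sub a a'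
  have hCsub2 : ∀ (i j : Fin (n + 1)) (a b b' : V),
      C (x i) (x j) a (b - b') = C (x i) (x j) a b - C (x i) (x j) a b' :=
    fun i j a b b' => ((hbil (x i) (x j)).2 a).map_sub b b'
  have hCadd1 : ∀ (i j : Fin (n + 1)) (a a' b : V),
      C (x i) (x j) (a + a') b = C (x i) (x j) a b + C (x i) (x j) a' b :=
    fun i j a a' b => ((hbil (x i) (x j)).1 b).map_add a a'
  have hCadd2 : ∀ (i j : Fin (n + 1)) (a b b' : V),
      C (x i) (x j) a (b + b') = C (x i) (x j) a b + C (x i) (x j) a b' :=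
    fun i j a b b' => ((hbil (x i) (x j)).2 a).map_add b b'
  have hCsum1 : ∀ (i j : Fin (n + 1)) (b : V) (g : Fin n → V),
      C (x i) (x j) (∑ m : Fin n, g m) b = ∑ m : Fin n, C (x i) (x j) (g m) b :=
    fun i j b g =>
      SA.lin_sum (fun a => C (x i) (x j) a b) ((hbil (x i) (x j)).1 b) Finset.univ g
  have hCsum2 : ∀ (i j : Fin (n + 1)) (a : V) (g : Fin n → V),
      C (x i) (x j) a (∑ m : Fin n, g m) = ∑ m : Fin n, C (x i) (x j) a (g m) :=
    fun i j a g => SA.lin_sum (C (x i) (x j) a) ((hbil (x i) (x j)).2 a) Finset.univ g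
  constructor
  · -- even case
    intro hfe
    have hfeW : ∀ (X : Fin n → Pt D) (u : Fin n → V), gConj γ f X u = f X u := hfe
    have hfe' : ∀ (X : Fin n → Pt D) (u : Fin n → V),
        γ (f X fun j => γ (u j)) = f X u := hfe
    have hγf : ∀ (X : Fin n → Pt D) (u : Fin n → V),
        f X (fun j => γ (u j)) = γ (f X u) := by
      intro X u
      have h := hfe' X (fun j => γ (u j))
      simp only [hγγ] at h
      exact h.symm
    rw [SA.Bop_eq γ s (cobE C f) x v,
      Finset.sum_congr rfl
        (fun i _ => SA.cobE_gconj hγ hγγ hn hCg hfe' (SA.Wm γ s v i))]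
    have e2 : ∑ i : Fin (n + 1), cobE C f x (SA.Wm γ s v i) =
        (∑ i : Fin (n + 1), C (x 0) (x (Fin.last n)) (SA.Wm γ s v i 0)
          (f (fun j => x j.succ) (SA.tl (SA.Wm γ s v i))))
        + (∑ i : Fin (n + 1), ∑ k : Fin n, ((-1 : ℂ) ^ ((k : ℕ) + 1)) •
            f (fun j => x (k.castSucc.succAbove j)) (SA.Qa C x (SA.Wm γ s v i) k))
        + (∑ i : Fin (n + 1), ((-1 : ℂ) ^ (n + 1)) •
            C (x ⟨n - 1, by omega⟩) (x (Fin.last n))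
              (f (fun j => x j.castSucc) (SA.fr (SA.Wm γ s v i)))
              (SA.Wm γ s v i (Fin.last n))) := by
      simp only [SA.cobE_eq]
      rw [Finset.sum_add_distrib, Finset.sum_add_distrib]
    have e2P : ∑ i : Fin (n + 1), C (x 0) (x (Fin.last n)) (SA.Wm γ s v i 0)
          (f (fun j => x j.succ) (SA.tl (SA.Wm γ s v i))) =
        C (x 0) (x (Fin.last n)) (s (v 0)) (f (fun j => x j.succ) (SA.tl v))
        + ∑ j : Fin n, C (x 0) (x (Fin.last n)) (γ (v 0))
            (f (fun j => x j.succ) (SA.Wm γ s (SA.tl v) j)) :=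
      SA.Psum γ s v f _ (C (x 0) (x (Fin.last n)))
    have e2Q : ∑ i : Fin (n + 1), ∑ k : Fin n, ((-1 : ℂ) ^ ((k : ℕ) + 1)) •
          f (fun j => x (k.castSucc.succAbove j)) (SA.Qa C x (SA.Wm γ s v i) k) =
        ∑ k : Fin n, ((-1 : ℂ) ^ ((k : ℕ) + 1)) •
          ∑ j : Fin n, f (fun j' => x (k.castSucc.succAbove j'))
            (SA.Wm γ s (SA.Qa C x v k) j) := by
      rw [Finset.sum_comm]
      refine Finset.sum_congr rfl fun k _ => ?_
      rw [← Finset.smul_sum,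
        SA.Qsum γ s C x v f hf _ k
          (hCg k.castSucc k.succ (Fin.castSucc_lt_succ : k.castSucc < k.succ).ne)
          (hsC k.castSucc k.succ (Fin.castSucc_lt_succ : k.castSucc < k.succ).ne)]
    have e2R : ∑ i : Fin (n + 1), ((-1 : ℂ) ^ (n + 1)) •
          C (x ⟨n - 1, by omega⟩) (x (Fin.last n))
            (f (fun j => x j.castSucc) (SA.fr (SA.Wm γ s v i)))
            (SA.Wm γ s v i (Fin.last n)) =
        ((-1 : ℂ) ^ (n + 1)) • ∑ j : Fin n,
            C (x ⟨n - 1, by omega⟩) (x (Fin.last n))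
              (f (fun j' => x j'.castSucc) (SA.Wm γ s (SA.fr v) j)) (v (Fin.last n))
        + ((-1 : ℂ) ^ (n + 1)) •
            C (x ⟨n - 1, by omega⟩) (x (Fin.last n))
              (γ (f (fun j => x j.castSucc) (SA.fr v))) (s (v (Fin.last n))) := by
      rw [← Finset.smul_sum,
        SA.Rsum γ s v f _ (C (x ⟨n - 1, by omega⟩) (x (Fin.last n))), hγf, smul_add]
    have H1 : s (cobE C f x v) =
        C (x 0) (x (Fin.last n)) (s (v 0)) (f (fun j => x j.succ) (SA.tl v))
        + C (x 0) (x (Fin.last n)) (γ (v 0)) (s (f (fun j => x j.succ) (SA.tl v)))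
        + ∑ k : Fin n, ((-1 : ℂ) ^ ((k : ℕ) + 1)) •
            s (f (fun j => x (k.castSucc.succAbove j)) (SA.Qa C x v k))
        + (((-1 : ℂ) ^ (n + 1)) • C (x ⟨n - 1, by omega⟩) (x (Fin.last n))
            (s (f (fun j => x j.castSucc) (SA.fr v))) (v (Fin.last n))
          + ((-1 : ℂ) ^ (n + 1)) • C (x ⟨n - 1, by omega⟩) (x (Fin.last n))
            (γ (f (fun j => x j.castSucc) (SA.fr v))) (s (v (Fin.last n)))) := by
      rw [SA.cobE_eq C f x v, hs.map_add, hs.map_add, SA.lin_sum s hs]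
      simp only [hs.map_smul]
      rw [hsC 0 (Fin.last n) h0l, hsC _ _ hml, smul_add]
    have H3 : cobO C γ (Bop γ s f) x v =
        -C (x 0) (x (Fin.last n)) (γ (v 0)) (s (f (fun j => x j.succ) (SA.tl v)))
        + ∑ j : Fin n, C (x 0) (x (Fin.last n)) (γ (v 0))
            (f (fun j' => x j'.succ) (SA.Wm γ s (SA.tl v) j))
        - ∑ k : Fin n, ((-1 : ℂ) ^ ((k : ℕ) + 1)) •
            s (f (fun j => x (k.castSucc.succAbove j)) (SA.Qa C x v k))
        + ∑ k : Fin n, ((-1 : ℂ) ^ ((k : ℕ) + 1)) •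
            ∑ j : Fin n, f (fun j' => x (k.castSucc.succAbove j'))
              (SA.Wm γ s (SA.Qa C x v k) j)
        - ((-1 : ℂ) ^ (n + 1)) • C (x ⟨n - 1, by omega⟩) (x (Fin.last n))
            (s (f (fun j => x j.castSucc) (SA.fr v))) (v (Fin.last n))
        + ((-1 : ℂ) ^ (n + 1)) • ∑ j : Fin n,
            C (x ⟨n - 1, by omega⟩) (x (Fin.last n))
              (f (fun j' => x j'.castSucc) (SA.Wm γ s (SA.fr v) j)) (v (Fin.last n)) := by
      rw [SA.cobO_eq C γ (Bop γ s f) x v]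
      simp only [SA.Bop_eq γ s f, hfeW]
      rw [hCsub2 0 (Fin.last n) (γ (v 0)), hCsum2 0 (Fin.last n) (γ (v 0)),
        hCsub1 _ _ _ _ (v (Fin.last n)), hCsum1 _ _ (v (Fin.last n))]
      simp only [smul_sub]
      rw [Finset.sum_sub_distrib]
      abel
    rw [H1, e2, e2P, e2Q, e2R, H3]
    abel
  · -- odd case
    intro hfo
    have hfoW : ∀ (X : Fin n → Pt D) (u : Fin n → V), gConj γ f X u = -f X u := hfo
    have hfo' : ∀ (X : Fin n → Pt D) (u : Fin n → V),
        γ (f X fun j => γ (u j)) = -f X u := hfo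
    have hγf : ∀ (X : Fin n → Pt D) (u : Fin n → V),
        f X (fun j => γ (u j)) = -γ (f X u) := by
      intro X u
      have h := hfo' X (fun j => γ (u j))
      simp only [hγγ] at h
      rw [h, neg_neg]
    rw [SA.Bop_eq γ s (cobO C γ f) x v,
      Finset.sum_congr rfl
        (fun i _ => SA.cobO_gconj hγ hγγ hn hCg hCneg1 hCneg2 hfo' (SA.Wm γ s v i)),
      Finset.sum_neg_distrib, sub_neg_eq_add]
    have e2 : ∑ i : Fin (n + 1), cobO C γ f x (SA.Wm γ s v i) =
        -(∑ i : Fin (n + 1), C (x 0) (x (Fin.last n)) (γ (SA.Wm γ s v i 0))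
          (f (fun j => x j.succ) (SA.tl (SA.Wm γ s v i))))
        - (∑ i : Fin (n + 1), ∑ k : Fin n, ((-1 : ℂ) ^ ((k : ℕ) + 1)) •
            f (fun j => x (k.castSucc.succAbove j)) (SA.Qa C x (SA.Wm γ s v i) k))
        - (∑ i : Fin (n + 1), ((-1 : ℂ) ^ (n + 1)) •
            C (x ⟨n - 1, by omega⟩) (x (Fin.last n))
              (f (fun j => x j.castSucc) (SA.fr (SA.Wm γ s v i)))
              (SA.Wm γ s v i (Fin.last n))) := by
      simp only [SA.cobO_eq]
      rw [Finset.sum_sub_distrib, Finset.sum_sub_distrib, Finset.sum_neg_distrib]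
    have e2P : ∑ i : Fin (n + 1), C (x 0) (x (Fin.last n)) (γ (SA.Wm γ s v i 0))
          (f (fun j => x j.succ) (SA.tl (SA.Wm γ s v i))) =
        -C (x 0) (x (Fin.last n)) (s (γ (v 0))) (f (fun j => x j.succ) (SA.tl v))
        + ∑ j : Fin n, C (x 0) (x (Fin.last n)) (v 0)
            (f (fun j' => x j'.succ) (SA.Wm γ s (SA.tl v) j)) := by
      have h := SA.Psum γ s v f (fun j => x j.succ)
        (fun a b => C (x 0) (x (Fin.last n)) (γ a) b)
      rw [h, eq_neg_of_add_eq_zero_left (hγs (v 0)), hCneg1]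
      simp only [hγγ]
    have e2Q : ∑ i : Fin (n + 1), ∑ k : Fin n, ((-1 : ℂ) ^ ((k : ℕ) + 1)) •
          f (fun j => x (k.castSucc.succAbove j)) (SA.Qa C x (SA.Wm γ s v i) k) =
        ∑ k : Fin n, ((-1 : ℂ) ^ ((k : ℕ) + 1)) •
          ∑ j : Fin n, f (fun j' => x (k.castSucc.succAbove j'))
            (SA.Wm γ s (SA.Qa C x v k) j) := by
      rw [Finset.sum_comm]
      refine Finset.sum_congr rfl fun k _ => ?_
      rw [← Finset.smul_sum,
        SA.Qsum γ s C x v f hf _ k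
          (hCg k.castSucc k.succ (Fin.castSucc_lt_succ : k.castSucc < k.succ).ne)
          (hsC k.castSucc k.succ (Fin.castSucc_lt_succ : k.castSucc < k.succ).ne)]
    have e2R : ∑ i : Fin (n + 1), ((-1 : ℂ) ^ (n + 1)) •
          C (x ⟨n - 1, by omega⟩) (x (Fin.last n))
            (f (fun j => x j.castSucc) (SA.fr (SA.Wm γ s v i)))
            (SA.Wm γ s v i (Fin.last n)) =
        ((-1 : ℂ) ^ (n + 1)) • ∑ j : Fin n,
            C (x ⟨n - 1, by omega⟩) (x (Fin.last n))
              (f (fun j' => x j'.castSucc) (SA.Wm γ s (SA.fr v) j)) (v (Fin.last n))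
        - ((-1 : ℂ) ^ (n + 1)) •
            C (x ⟨n - 1, by omega⟩) (x (Fin.last n))
              (γ (f (fun j => x j.castSucc) (SA.fr v))) (s (v (Fin.last n))) := by
      rw [← Finset.smul_sum,
        SA.Rsum γ s v f _ (C (x ⟨n - 1, by omega⟩) (x (Fin.last n))), hγf, hCneg1,
        smul_add, smul_neg]
      abel
    have H1 : s (cobO C γ f x v) =
        -(C (x 0) (x (Fin.last n)) (s (γ (v 0))) (f (fun j => x j.succ) (SA.tl v))
          + C (x 0) (x (Fin.last n)) (v 0) (s (f (fun j => x j.succ) (SA.tl v))))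
        - ∑ k : Fin n, ((-1 : ℂ) ^ ((k : ℕ) + 1)) •
            s (f (fun j => x (k.castSucc.succAbove j)) (SA.Qa C x v k))
        - (((-1 : ℂ) ^ (n + 1)) • C (x ⟨n - 1, by omega⟩) (x (Fin.last n))
            (s (f (fun j => x j.castSucc) (SA.fr v))) (v (Fin.last n))
          + ((-1 : ℂ) ^ (n + 1)) • C (x ⟨n - 1, by omega⟩) (x (Fin.last n))
            (γ (f (fun j => x j.castSucc) (SA.fr v))) (s (v (Fin.last n)))) := by
      rw [SA.cobO_eq C γ f x v, hs.map_sub, hs.map_sub, hs.map_neg, SA.lin_sum s hs]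
      simp only [hs.map_smul]
      rw [hsC 0 (Fin.last n) h0l, hsC _ _ hml, smul_add]
      simp only [hγγ]
    have H3 : cobE C (Bop γ s f) x v =
        C (x 0) (x (Fin.last n)) (v 0) (s (f (fun j => x j.succ) (SA.tl v)))
        + ∑ j : Fin n, C (x 0) (x (Fin.last n)) (v 0)
            (f (fun j' => x j'.succ) (SA.Wm γ s (SA.tl v) j))
        + ∑ k : Fin n, ((-1 : ℂ) ^ ((k : ℕ) + 1)) •
            s (f (fun j => x (k.castSucc.succAbove j)) (SA.Qa C x v k))
        + ∑ k : Fin n, ((-1 : ℂ) ^ ((k : ℕ) + 1)) •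
            ∑ j : Fin n, f (fun j' => x (k.castSucc.succAbove j'))
              (SA.Wm γ s (SA.Qa C x v k) j)
        + ((-1 : ℂ) ^ (n + 1)) • C (x ⟨n - 1, by omega⟩) (x (Fin.last n))
            (s (f (fun j => x j.castSucc) (SA.fr v))) (v (Fin.last n))
        + ((-1 : ℂ) ^ (n + 1)) • ∑ j : Fin n,
            C (x ⟨n - 1, by omega⟩) (x (Fin.last n))
              (f (fun j' => x j'.castSucc) (SA.Wm γ s (SA.fr v) j)) (v (Fin.last n)) := by
      rw [SA.cobE_eq C (Bop γ s f) x v]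
      simp only [SA.Bop_eq γ s f, hfoW, Finset.sum_neg_distrib, sub_neg_eq_add]
      rw [hCadd2 0 (Fin.last n) (v 0), hCsum2 0 (Fin.last n) (v 0),
        hCadd1 _ _ _ _ (v (Fin.last n)), hCsum1 _ _ (v (Fin.last n))]
      simp only [smul_add]
      rw [Finset.sum_add_distrib]
      abel
    rw [H1, e2, e2P, e2Q, e2R, H3]
    abel
end
end

section
/- Let D ≥ 2 and let V be a complex Banach space. Suppose C = (C_2, C_3, …) and Ĉ = (Ĉ_2, Ĉ_3, …) are two hierarchies where, for each n ≥ 2, C_n and Ĉ_n are real-analytic functions on M_n with values in the continuous n-multilinear maps V^n → V, and suppose both hierarchies satisfy the factorization property: for every n ≥ 3 and every (x_1,…,x_n) ∈ M_n with r_{1n} > r_{ij} for all 2 ≤ i < j ≤ n, one has C_n(x_1,…,x_n)(v_1,…,v_n) = C_2(x_1,x_n)(v_1, C_{n−1}(x_2,…,x_n)(v_2,…,v_n)) for all v_1,…,v_n ∈ V (and the same identity for Ĉ). If C_2 = Ĉ_2 on M_2, then C_n = Ĉ_n on M_n for every n ≥ 2. In particular, the n-point coefficients of such a hierarchy are uniquely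 determined by the 2-point coefficient. -/
noncomputable section

open Module Set

section Aux

variable {F : Type*} [NormedAddCommGroup F] [NormedSpace ℝ F] [FiniteDimensional ℝ F]

lemma aux_exists_notMem (s : Finset (Submodule ℝ F)) (h : ∀ W ∈ s, W ≠ ⊤) :
    ∃ x : F, ∀ W ∈ s, x ∉ W := by
  borelize F
  set μ := (Module.finBasis ℝ F).addHaar with hμdef
  have hμ : μ (⋃ W ∈ s, (W : Set F)) = 0 := by
    refine (MeasureTheory.measure_biUnion_null_iff s.countable_toSet).2 ?_
    intro W hW
    exact MeasureTheory.Measure.addHaar_submodule μ W (h W hW)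
  by_contra hc
  push_neg at hc
  have hsub : (Set.univ : Set F) ⊆ ⋃ W ∈ s, (W : Set F) := by
    intro x _
    obtain ⟨W, hW, hx⟩ := hc x
    exact Set.mem_biUnion hW hx
  have h0 : μ Set.univ = 0 := MeasureTheory.measure_mono_null hsub hμ
  exact isOpen_univ.measure_ne_zero μ Set.univ_nonempty h0

lemma aux_isPathConnected (s : Finset (Submodule ℝ F))
    (h : ∀ W ∈ s, finrank ℝ W + 2 ≤ finrank ℝ F) :
    IsPathConnected {x : F | ∀ W ∈ s, x ∉ W} := by
  classical
  set S := {x : F | ∀ W ∈ s, x ∉ W} with hS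
  have hproper : ∀ a : F, ∀ W ∈ s, W ⊔ Submodule.span ℝ {a} ≠ ⊤ := by
    intro a W hW htop
    have h1 : finrank ℝ (W ⊔ Submodule.span ℝ {a} : Submodule ℝ F)
        ≤ finrank ℝ W + finrank ℝ (Submodule.span ℝ ({a} : Set F)) :=
      Submodule.finrank_add_le_finrank_add_finrank W _
    have h2 : finrank ℝ (Submodule.span ℝ ({a} : Set F)) ≤ 1 := by
      simpa using finrank_span_le_card ({a} : Set F)
    rw [htop, finrank_top] at h1
    have := h W hW
    omega
  have seg : ∀ a ∈ S, ∀ c : F, (∀ W ∈ s, c ∉ W ⊔ Submodule.span ℝ {a}) → JoinedIn S a c := by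
    intro a ha c hc
    have mem : ∀ t : ℝ, (1 - t) • a + t • c ∈ S := by
      intro t W hW hmem
      rcases eq_or_ne t 0 with rfl | ht0
      · simp only [sub_zero, one_smul, zero_smul, add_zero] at hmem
        exact ha W hW hmem
      · apply hc W hW
        have haW : a ∈ W ⊔ Submodule.span ℝ {a} :=
          Submodule.mem_sup_right (Submodule.mem_span_singleton_self a)
        have hpW : (1 - t) • a + t • c ∈ W ⊔ Submodule.span ℝ {a} :=
          Submodule.mem_sup_left hmem
        have htc : t • c ∈ W ⊔ Submodule.span ℝ {a} := by
          have := Submodule.sub_mem _ hpW (Submodule.smul_mem _ (1 - t) haW)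
          simpa using this
        have := Submodule.smul_mem _ t⁻¹ htc
        rwa [smul_smul, inv_mul_cancel₀ ht0, one_smul] at this
    exact ⟨⟨⟨fun u => (1 - (u : ℝ)) • a + (u : ℝ) • c, by fun_prop⟩, by simp, by simp⟩,
      fun u => mem u⟩
  have hne : ∀ W ∈ s, W ≠ ⊤ := by
    intro W hW htop
    have := h W hW; rw [htop, finrank_top] at this; omega
  obtain ⟨x₀, hx₀⟩ := aux_exists_notMem s hne
  refine ⟨x₀, hx₀, ?_⟩
  intro b hb
  obtain ⟨c, hc⟩ := aux_exists_notMem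
    ((s.image fun W => W ⊔ Submodule.span ℝ {x₀}) ∪ (s.image fun W => W ⊔ Submodule.span ℝ {b}))
    (by
      intro W hW
      rcases Finset.mem_union.1 hW with hW | hW <;>
        · obtain ⟨U, hU, rfl⟩ := Finset.mem_image.1 hW
          exact hproper _ U hU)
  have hc1 : ∀ W ∈ s, c ∉ W ⊔ Submodule.span ℝ {x₀} := fun W hW =>
    hc _ (Finset.mem_union_left _ (Finset.mem_image_of_mem _ hW))
  have hc2 : ∀ W ∈ s, c ∉ W ⊔ Submodule.span ℝ {b} := fun W hW =>
    hc _ (Finset.mem_union_right _ (Finset.mem_image_of_mem _ hW))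
  exact (seg x₀ hx₀ c hc1).trans (seg b hb c hc2).symm

end Aux

lemma aux_inj_pair {α : Type*} {a b : α} (h : a ≠ b) : Function.Injective ![a, b] := by
  intro i j hij
  fin_cases i <;> fin_cases j <;> simp_all

lemma aux_preconnected_inj (D n : ℕ) (hD : 2 ≤ D) :
    IsPreconnected {x : Fin n → Pt D | Function.Injective x} := by
  classical
  set L : Fin n × Fin n → ((Fin n → Pt D) →ₗ[ℝ] Pt D) :=
    fun p => (LinearMap.proj p.1 : (Fin n → Pt D) →ₗ[ℝ] Pt D)
      - (LinearMap.proj p.2 : (Fin n → Pt D) →ₗ[ℝ] Pt D) with hL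
  set t : Finset (Fin n × Fin n) := Finset.univ.offDiag with ht
  have hset : {x : Fin n → Pt D | Function.Injective x}
      = {x : Fin n → Pt D | ∀ W ∈ t.image (fun p => LinearMap.ker (L p)), x ∉ W} := by
    ext x
    simp only [Set.mem_setOf_eq]
    constructor
    · intro hx W hW hmem
      obtain ⟨p, hp, rfl⟩ := Finset.mem_image.1 hW
      rw [LinearMap.mem_ker, hL] at hmem
      simp only [LinearMap.sub_apply, LinearMap.proj_apply, sub_eq_zero] at hmem
      exact (Finset.mem_offDiag.1 hp).2.2 (hx hmem)
    · intro hx i j hij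
      by_contra hne
      have hmem : (i, j) ∈ t :=
        Finset.mem_offDiag.2 ⟨Finset.mem_univ _, Finset.mem_univ _, hne⟩
      refine hx _ (Finset.mem_image_of_mem _ hmem) ?_
      rw [LinearMap.mem_ker, hL]
      simp only [LinearMap.sub_apply, LinearMap.proj_apply, hij, sub_self]
  rw [hset]
  refine (aux_isPathConnected _ ?_).isConnected.isPreconnected
  intro W hW
  obtain ⟨p, hp, rfl⟩ := Finset.mem_image.1 hW
  have hpne : p.1 ≠ p.2 := (Finset.mem_offDiag.1 hp).2.2
  have hsurj : Function.Surjective (L p) := by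
    intro v
    refine ⟨Function.update (0 : Fin n → Pt D) p.1 v, ?_⟩
    rw [hL]
    simp only [LinearMap.sub_apply, LinearMap.proj_apply]
    rw [Function.update_self, Function.update_of_ne (Ne.symm hpne)]
    simp
  have hrn := LinearMap.finrank_range_add_finrank_ker (L p)
  rw [LinearMap.range_eq_top.2 hsurj, finrank_top] at hrn
  have hfe : finrank ℝ (Pt D) = D := finrank_euclideanSpace_fin
  omega

lemma aux_isOpen_inj (D m : ℕ) : IsOpen {x : Fin m → Pt D | Function.Injective x} := by
  classical
  have hset : {x : Fin m → Pt D | Function.Injective x}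
      = ⋂ p : Fin m × Fin m, if p.1 = p.2 then Set.univ else {x | x p.1 ≠ x p.2} := by
    ext x
    simp only [Set.mem_iInter, Set.mem_setOf_eq]
    constructor
    · intro hx p
      by_cases hp : p.1 = p.2
      · simp [hp]
      · simpa [hp] using fun hxy => hp (hx hxy)
    · intro hx i j hij
      by_contra hne
      have := hx (i, j)
      rw [if_neg hne] at this
      exact this hij
  rw [hset]
  refine isOpen_iInter_of_finite fun p => ?_
  by_cases hp : p.1 = p.2
  · simp only [hp, if_pos]; exact isOpen_univ
  · rw [if_neg hp]
    exact isOpen_ne_fun (continuous_apply p.1) (continuous_apply p.2)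

/-- a real-analytic hierarchy of OPE coefficients satisfying the factorization
property is uniquely determined by its 2-point coefficient. -/
theorem stmt7 {D : ℕ} (hD : 2 ≤ D) {V : Type*} [NormedAddCommGroup V] [NormedSpace ℂ V]
    [CompleteSpace V]
    (C C' : (n : ℕ) → (Fin n → Pt D) → ContinuousMultilinearMap ℂ (fun _ : Fin n => V) V)
    (hCa : ∀ n, 2 ≤ n → AnalyticOnNhd ℝ (C n) {x | Function.Injective x})
    (hC'a : ∀ n, 2 ≤ n → AnalyticOnNhd ℝ (C' n) {x | Function.Injective x})
    (hCfac : ∀ n, ∀ hn : 3 ≤ n, ∀ x : Fin n → Pt D, Function.Injective x →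
      (∀ i j : Fin n, 1 ≤ (i : ℕ) → (i : ℕ) < (j : ℕ) →
        dist (x i) (x j) < dist (x ⟨0, by omega⟩) (x ⟨n - 1, by omega⟩)) →
      ∀ v : Fin n → V,
        C n x v = C 2 ![x ⟨0, by omega⟩, x ⟨n - 1, by omega⟩]
          ![v ⟨0, by omega⟩,
            C (n - 1) (fun j => x ⟨(j : ℕ) + 1, by have := j.isLt; omega⟩)
              (fun j => v ⟨(j : ℕ) + 1, by have := j.isLt; omega⟩)])
    (hC'fac : ∀ n, ∀ hn : 3 ≤ n, ∀ x : Fin n → Pt D, Function.Injective x →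
      (∀ i j : Fin n, 1 ≤ (i : ℕ) → (i : ℕ) < (j : ℕ) →
        dist (x i) (x j) < dist (x ⟨0, by omega⟩) (x ⟨n - 1, by omega⟩)) →
      ∀ v : Fin n → V,
        C' n x v = C' 2 ![x ⟨0, by omega⟩, x ⟨n - 1, by omega⟩]
          ![v ⟨0, by omega⟩,
            C' (n - 1) (fun j => x ⟨(j : ℕ) + 1, by have := j.isLt; omega⟩)
              (fun j => v ⟨(j : ℕ) + 1, by have := j.isLt; omega⟩)])
    (h2 : ∀ x : Fin 2 → Pt D, Function.Injective x → C 2 x = C' 2 x)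
    (n : ℕ) (hn : 2 ≤ n) (x : Fin n → Pt D) (hx : Function.Injective x) :
    C n x = C' n x := by
  have key : ∀ m, 2 ≤ m → ∀ y : Fin m → Pt D, Function.Injective y → C m y = C' m y := by
    intro m hm
    induction m, hm using Nat.le_induction with
    | base => exact fun y hy => h2 y hy
    | succ m hm IH =>
      intro y hy
      have key3 : (3 : ℕ) ≤ m + 1 := by omega
      set W := {z : Fin (m + 1) → Pt D | Function.Injective z ∧
        ∀ i j : Fin (m + 1), 1 ≤ (i : ℕ) → (i : ℕ) < (j : ℕ) →
          dist (z i) (z j) < dist (z ⟨0, by omega⟩) (z ⟨m + 1 - 1, by omega⟩)} with hWdef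
      -- equality on W
      have hWeq : Set.EqOn (C (m + 1)) (C' (m + 1)) W := by
        intro z hz
        obtain ⟨hzinj, hzsep⟩ := hz
        refine ContinuousMultilinearMap.ext fun v => ?_
        rw [hCfac (m + 1) key3 z hzinj hzsep v, hC'fac (m + 1) key3 z hzinj hzsep v]
        have htail : Function.Injective
            (fun j : Fin (m + 1 - 1) => z ⟨(j : ℕ) + 1, by have := j.isLt; omega⟩) := by
          intro a b hab
          have hv := congrArg Fin.val (hzinj hab)
          simp only at hv
          exact Fin.ext (by omega)
        have tail_eq : (C (m + 1 - 1) fun j : Fin (m + 1 - 1) =>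
              z ⟨(j : ℕ) + 1, by have := j.isLt; omega⟩)
            = C' (m + 1 - 1) fun j : Fin (m + 1 - 1) =>
              z ⟨(j : ℕ) + 1, by have := j.isLt; omega⟩ := IH _ htail
        rw [tail_eq]
        have hzne : z ⟨0, by omega⟩ ≠ z ⟨m + 1 - 1, by omega⟩ := by
          intro hcon
          have hc2 := hzinj hcon
          simp only [Fin.mk.injEq] at hc2
          omega
        rw [h2 _ (aux_inj_pair hzne)]
      -- z₀ construction
      set e : Pt D := EuclideanSpace.single (⟨0, by omega⟩ : Fin D) (1 : ℝ) with he
      have hnorm_e : ‖e‖ = 1 := by rw [he, EuclideanSpace.norm_single]; norm_num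
      have he0 : e ≠ 0 := by
        intro h; rw [h] at hnorm_e; simp at hnorm_e
      set g : Fin (m + 1) → ℕ := fun k => if (k : ℕ) = 0 then 10 * (m + 1) else (k : ℕ) with hg
      set z₀ : Fin (m + 1) → Pt D := fun k => (g k : ℝ) • e with hz₀def
      have hginj : Function.Injective g := by
        intro k l hkl
        rw [hg] at hkl
        simp only at hkl
        have hk := k.isLt; have hl := l.isLt
        split_ifs at hkl <;> first
          | (exact Fin.ext (by omega))
          | omega
      have hz₀inj : Function.Injective z₀ := by
        intro k l hkl
        rw [hz₀def] at hkl
        simp only at hkl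
        have hsub : ((g k : ℝ) - g l) • e = 0 := by rw [sub_smul, hkl, sub_self]
        rcases smul_eq_zero.1 hsub with h | h
        · have : (g k : ℝ) = g l := by linarith [sub_eq_zero.1 h]
          exact hginj (by exact_mod_cast this)
        · exact absurd h he0
      have hdist : ∀ k l, dist (z₀ k) (z₀ l) = |(g k : ℝ) - (g l : ℝ)| := by
        intro k l
        rw [hz₀def]
        simp only
        rw [dist_eq_norm, ← sub_smul, norm_smul, hnorm_e, mul_one, Real.norm_eq_abs]
      have hz₀W : z₀ ∈ W := by
        refine ⟨hz₀inj, ?_⟩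
        intro i j hi hij
        rw [hdist, hdist]
        have hgi : g i = (i : ℕ) := by rw [hg]; simp only; rw [if_neg (by omega)]
        have hgj : g j = (j : ℕ) := by rw [hg]; simp only; rw [if_neg (by omega)]
        have hg0 : g ⟨0, by omega⟩ = 10 * (m + 1) := by simp [hg]
        have hglast : g ⟨m + 1 - 1, by omega⟩ = m := by
          rw [hg]; simp only; rw [if_neg (by omega)]; omega
        rw [hgi, hgj, hg0, hglast]
        have hjm : (j : ℕ) ≤ m := by omega
        have hi' : ((i : ℕ) : ℝ) ≤ m := by exact_mod_cast (by omega : (i : ℕ) ≤ m)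
        have hj' : ((j : ℕ) : ℝ) ≤ m := by exact_mod_cast hjm
        have hi0 : (0 : ℝ) ≤ ((i : ℕ) : ℝ) := Nat.cast_nonneg _
        have hj0 : (0 : ℝ) ≤ ((j : ℕ) : ℝ) := Nat.cast_nonneg _
        have hm0 : (0 : ℝ) ≤ (m : ℝ) := Nat.cast_nonneg _
        have hval : ((10 * (m + 1) : ℕ) : ℝ) - (m : ℝ) = 9 * (m : ℝ) + 10 := by
          push_cast; ring
        calc |((i : ℕ) : ℝ) - ((j : ℕ) : ℝ)| ≤ (m : ℝ) := abs_le.2 ⟨by linarith, by linarith⟩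
          _ < 9 * (m : ℝ) + 10 := by linarith
          _ ≤ |((10 * (m + 1) : ℕ) : ℝ) - (m : ℝ)| := by rw [hval]; exact le_abs_self _
      -- W is open
      have hWopen : IsOpen W := by
        rw [hWdef, Set.setOf_and]
        refine (aux_isOpen_inj D (m + 1)).inter ?_
        have hrw : {z : Fin (m + 1) → Pt D |
            ∀ i j : Fin (m + 1), 1 ≤ (i : ℕ) → (i : ℕ) < (j : ℕ) →
              dist (z i) (z j) < dist (z ⟨0, by omega⟩) (z ⟨m + 1 - 1, by omega⟩)}
            = ⋂ p : Fin (m + 1) × Fin (m + 1),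
              {z : Fin (m + 1) → Pt D | 1 ≤ (p.1 : ℕ) → (p.1 : ℕ) < (p.2 : ℕ) →
                dist (z p.1) (z p.2) < dist (z ⟨0, by omega⟩) (z ⟨m + 1 - 1, by omega⟩)} := by
          ext z
          simp only [Set.mem_iInter, Set.mem_setOf_eq]
          exact ⟨fun h p => h p.1 p.2, fun h i j => h (i, j)⟩
        rw [hrw]
        refine isOpen_iInter_of_finite fun p => ?_
        rcases Classical.em (1 ≤ (p.1 : ℕ) ∧ (p.1 : ℕ) < (p.2 : ℕ)) with h | h
        · have : {z : Fin (m + 1) → Pt D | 1 ≤ (p.1 : ℕ) → (p.1 : ℕ) < (p.2 : ℕ) →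
              dist (z p.1) (z p.2) < dist (z ⟨0, by omega⟩) (z ⟨m + 1 - 1, by omega⟩)}
              = {z : Fin (m + 1) → Pt D |
                dist (z p.1) (z p.2) < dist (z ⟨0, by omega⟩) (z ⟨m + 1 - 1, by omega⟩)} := by
            ext z; simp [h.1, h.2]
          rw [this]
          exact isOpen_lt ((continuous_apply p.1).dist (continuous_apply p.2))
            ((continuous_apply _).dist (continuous_apply _))
        · have : {z : Fin (m + 1) → Pt D | 1 ≤ (p.1 : ℕ) → (p.1 : ℕ) < (p.2 : ℕ) →
              dist (z p.1) (z p.2) < dist (z ⟨0, by omega⟩) (z ⟨m + 1 - 1, by omega⟩)}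
              = Set.univ := by
            ext z
            simp only [Set.mem_setOf_eq, Set.mem_univ, iff_true]
            intro ha hb
            exact absurd ⟨ha, hb⟩ h
          rw [this]
          exact isOpen_univ
      have hz₀S : z₀ ∈ {x : Fin (m + 1) → Pt D | Function.Injective x} := hz₀W.1
      have hev : C (m + 1) =ᶠ[nhds z₀] C' (m + 1) :=
        Filter.eventuallyEq_of_mem (hWopen.mem_nhds hz₀W) hWeq
      exact (hCa (m + 1) (by omega)).eqOn_of_preconnected_of_eventuallyEq
        (hC'a (m + 1) (by omega)) (aux_preconnected_inj D (m + 1) hD) hz₀S hev hy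
  exact key n hn x hx
end
end

section
/- (Coherence Theorem.) Let D ≥ 2, let V be a complex Banach space, and let C be a real-analytic function on M_2 with values in the continuous bilinear maps V × V → V. A binary tree T on {1,…,n} is a family of subsets of {1,…,n} containing {1,…,n} and every singleton {i}, such that any two members are disjoint or nested, and every non-singleton member S is the disjoint union of exactly two members of T (its children, the maximal members of T properly contained in S). For (x_1,…,x_n) ∈ M_n and S ∈ T define recursively the |S|-multilinear map f_S: f_{{i}} := id_V, and for a non-singleton S with children S_1, S_2 with maximal elements m_1 < m_2, f_S((v_i)_{i∈S}) := C(x_{m_1}, x_{m_2})( f_{S_1}((v_i)_{i∈S_1}), f_{S_2}((v_i)_{i∈S_2}) ); set f_T(x_1,…,x_n) := f_{{1,…,n}}, an n-multilinear map V^n → V whose k-th input slot corresponds to the leaf {k}. Let D[T] ⊆ M_n be the open set of tuples such that for every non-singleton S ∈ T with children S_1, S_2 (maximal elements m_1, m_2): r_{m_1 m_2} > r_{ij} for all distinct i, j lying both in S_1 or both in S_2. Assume that for every m ≥ 2 and every binary tree T on {1,…,m}, the function f_T (real-analytic on D[T]) extends to a real-analytic function F_T on all of M_m, and assume that for m = 3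 the three functions F_T associated with the three binary trees on {1,2,3} coincide on M_3. Then for every n ≥ 2 and every pair of binary trees T, T′ on {1,…,n}, F_T = F_{T′} on M_n. -/
noncomputable section

/-- Binary trees with leaves labeled by elements of `Fin n`. -/
inductive BTree (n : ℕ) : Type
  | leaf : Fin n → BTree n
  | node : BTree n → BTree n → BTree n

namespace BTree

/-- The set of leaf labels of a binary tree. -/
def leaves {n : ℕ} : BTree n → Finset (Fin n)
  | leaf i => {i}
  | node l r => leaves l ∪ leaves r

/-- The maximal leaf label of a binary tree. -/
def maxLeaf {n : ℕ} : BTree n → Fin n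
  | leaf i => i
  | node l r => max (maxLeaf l) (maxLeaf r)

/-- A tree is valid if the leaf sets of the two children of any node are disjoint and the
children are ordered by their maximal elements.  A valid tree with `leaves = univ`
corresponds exactly to a binary tree on `{1, …, n}` in the sense of nested families of
subsets, each non-singleton member being the disjoint union of its two children. -/
def Valid {n : ℕ} : BTree n → Prop
  | leaf _ => True
  | node l r => Valid l ∧ Valid r ∧ Disjoint (leaves l) (leaves r) ∧ maxLeaf l < maxLeaf r

/-- The recursively defined multilinear expression `f_T`:
`f_S = C(x_{m₁}, x_{m₂})(f_{S₁}, f_{S₂})` where `m₁ < m₂` are the maximal elements of the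
children `S₁, S₂`, and `f_{{k}}(v) = v k`. -/
def evalT {D : ℕ} {V : Type*} [NormedAddCommGroup V] [NormedSpace ℂ V] {n : ℕ}
    (C : Pt D → Pt D → (V →L[ℂ] V →L[ℂ] V)) (x : Fin n → Pt D) (v : Fin n → V) :
    BTree n → V
  | leaf i => v i
  | node l r => C (x l.maxLeaf) (x r.maxLeaf) (evalT C x v l) (evalT C x v r)

/-- The domain `D[T]`: for every node with children `S₁, S₂` (maximal elements `m₁, m₂`),
`r_{m₁ m₂} > r_{ij}` for all distinct `i, j` lying both in `S₁` or both in `S₂`. -/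
def InDom {D : ℕ} {n : ℕ} (x : Fin n → Pt D) : BTree n → Prop
  | leaf _ => True
  | node l r => InDom x l ∧ InDom x r ∧
      (∀ i ∈ l.leaves, ∀ j ∈ l.leaves, i ≠ j →
        dist (x i) (x j) < dist (x l.maxLeaf) (x r.maxLeaf)) ∧
      (∀ i ∈ r.leaves, ∀ j ∈ r.leaves, i ≠ j →
        dist (x i) (x j) < dist (x l.maxLeaf) (x r.maxLeaf))

end BTree


-- ===== auxiliary material =====


/-- applying an analytic family of ℂ-linear maps to an analytic function is analytic (over ℝ). -/
theorem AnalyticAt.capply {E U W : Type*} [NormedAddCommGroup E] [NormedSpace ℝ E]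
    [NormedAddCommGroup U] [NormedSpace ℂ U] [NormedAddCommGroup W] [NormedSpace ℂ W]
    {f : E → (U →L[ℂ] W)} {g : E → U} {x : E}
    (hf : AnalyticAt ℝ f x) (hg : AnalyticAt ℝ g x) :
    AnalyticAt ℝ (fun y => f y (g y)) x := by
  have h1 : AnalyticAt ℝ (fun y => (ContinuousLinearMap.restrictScalarsL ℂ U W ℝ ℝ) (f y)) x :=
    ((ContinuousLinearMap.restrictScalarsL ℂ U W ℝ ℝ).analyticAt _).comp hf
  have h2 := ((ContinuousLinearMap.id ℝ (U →L[ℝ] W)).analyticAt_bilinear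
      ((f x).restrictScalars ℝ, g x)).comp₂ h1 hg
  exact h2


namespace BTree

variable {n : ℕ}

theorem leaves_nonempty (t : BTree n) : t.leaves.Nonempty := by
  induction t with
  | leaf i => exact ⟨i, Finset.mem_singleton_self i⟩
  | node l r ihl ihr => exact ihl.mono (by simp [leaves, Finset.subset_union_left])

theorem le_maxLeaf (t : BTree n) : ∀ i ∈ t.leaves, i ≤ t.maxLeaf := by
  induction t with
  | leaf i => simp [leaves, maxLeaf]
  | node l r ihl ihr =>
    intro i hi
    rcases Finset.mem_union.1 hi with h | h
    · exact le_trans (ihl i h) (le_max_left _ _)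
    · exact le_trans (ihr i h) (le_max_right _ _)

theorem maxLeaf_mem (t : BTree n) : t.maxLeaf ∈ t.leaves := by
  induction t with
  | leaf i => exact Finset.mem_singleton_self i
  | node l r ihl ihr =>
    show max l.maxLeaf r.maxLeaf ∈ l.leaves ∪ r.leaves
    rcases max_cases l.maxLeaf r.maxLeaf with ⟨h, _⟩ | ⟨h, _⟩ <;> rw [h]
    · exact Finset.mem_union_left _ ihl
    · exact Finset.mem_union_right _ ihr

theorem maxLeaf_eq_max' (t : BTree n) : t.maxLeaf = t.leaves.max' t.leaves_nonempty :=
  le_antisymm (Finset.le_max' _ _ t.maxLeaf_mem) (Finset.max'_le _ _ _ t.le_maxLeaf)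

/-- the canonical left comb tree of a nonempty finset -/
def canon (S : Finset (Fin n)) (h : S.Nonempty) : BTree n :=
  if h' : (S.erase (S.max' h)).Nonempty then
    node (canon (S.erase (S.max' h)) h') (leaf (S.max' h))
  else leaf (S.max' h)
  termination_by S.card
  decreasing_by exact Finset.card_erase_lt_of_mem (S.max'_mem h)

theorem maxLeaf_canon (S : Finset (Fin n)) (h : S.Nonempty) :
    (canon S h).maxLeaf = S.max' h := by
  rw [canon]
  split
  case isTrue h' =>
    have ih := maxLeaf_canon (S.erase (S.max' h)) h'
    show max (canon _ h').maxLeaf (S.max' h) = S.max' h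
    rw [ih]
    exact max_eq_right (le_of_lt (Finset.lt_max'_of_mem_erase_max' _ h
      (Finset.max'_mem _ h')))
  case isFalse => rfl
  termination_by S.card
  decreasing_by exact Finset.card_erase_lt_of_mem (S.max'_mem h)

theorem canon_congr {n : ℕ} {S S' : Finset (Fin n)} (h : S.Nonempty) (hss : S = S') :
    canon S h = canon S' (hss ▸ h) := by subst hss; rfl

theorem canon_singleton' {n : ℕ} (i : Fin n) (h : ({i} : Finset (Fin n)).Nonempty) :
    canon {i} h = leaf i := by
  rw [canon]
  rw [dif_neg (by simp)]
  exact congrArg leaf (Finset.max'_singleton i)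

section Merge

variable {D : ℕ} {V : Type*} [NormedAddCommGroup V] [NormedSpace ℂ V]
  (C : Pt D → Pt D → (V →L[ℂ] V →L[ℂ] V))
  {n : ℕ} (x : Fin n → Pt D) (v : Fin n → V)

theorem evalT_node (l r : BTree n) :
    evalT C x v (node l r)
      = C (x l.maxLeaf) (x r.maxLeaf) (evalT C x v l) (evalT C x v r) := rfl

theorem evalT_leaf (i : Fin n) : evalT C x v (leaf i) = v i := rfl

variable (hE1 : ∀ p q r : Fin n, p ≠ q → p ≠ r → q ≠ r → ∀ u w z : V,
      C (x q) (x r) (C (x p) (x q) u w) z = C (x p) (x r) u (C (x q) (x r) w z))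
  (hE2 : ∀ p q r : Fin n, p ≠ q → p ≠ r → q ≠ r → ∀ u w z : V,
      C (x p) (x r) u (C (x q) (x r) w z) = C (x q) (x r) w (C (x p) (x r) u z))

include hE1 hE2 in
theorem merge_canon : ∀ (N : ℕ) (S1 S2 : Finset (Fin n)) (h1 : S1.Nonempty)
    (h2 : S2.Nonempty), S1.card + S2.card ≤ N → Disjoint S1 S2 →
    S1.max' h1 < S2.max' h2 →
    evalT C x v (node (canon S1 h1) (canon S2 h2))
      = evalT C x v (canon (S1 ∪ S2) (h1.mono Finset.subset_union_left)) := by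
  intro N
  induction N with
  | zero =>
    intro S1 S2 h1 h2 hcard _ _
    have := Finset.card_pos.2 h1
    omega
  | succ N ih =>
    intro S1 S2 h1 h2 hcard hdisj hlt
    have hm2S1 : S2.max' h2 ∉ S1 := fun hmem =>
      absurd (Finset.le_max' S1 _ hmem) (not_le.2 hlt)
    have hUne : (S1 ∪ S2).Nonempty := h1.mono Finset.subset_union_left
    have hmaxU : (S1 ∪ S2).max' hUne = S2.max' h2 := by
      refine le_antisymm (Finset.max'_le _ _ _ ?_) (Finset.le_max' _ _
        (Finset.mem_union_right _ (S2.max'_mem h2)))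
      intro y hy
      rcases Finset.mem_union.1 hy with h | h
      · exact le_trans (Finset.le_max' _ _ h) hlt.le
      · exact Finset.le_max' _ _ h
    by_cases h2' : (S2.erase (S2.max' h2)).Nonempty
    · -- S2 has at least two elements
      have hbS2 : (S2.erase (S2.max' h2)).max' h2' ∈ S2.erase (S2.max' h2) :=
        Finset.max'_mem _ h2'
      have hbm2 : (S2.erase (S2.max' h2)).max' h2' < S2.max' h2 :=
        Finset.lt_max'_of_mem_erase_max' S2 h2 hbS2
      have ham2 : S1.max' h1 < S2.max' h2 := hlt
      have hab : S1.max' h1 ≠ (S2.erase (S2.max' h2)).max' h2' := by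
        intro h
        exact Finset.disjoint_left.1 hdisj (S1.max'_mem h1)
          (h ▸ Finset.mem_of_mem_erase hbS2)
      have hdisj' : Disjoint S1 (S2.erase (S2.max' h2)) :=
        hdisj.mono_right (Finset.erase_subset _ _)
      have hcard' : S1.card + (S2.erase (S2.max' h2)).card ≤ N := by
        have h1c := Finset.card_erase_lt_of_mem (S2.max'_mem h2)
        omega
      have heraseU : (S1 ∪ S2).erase (S2.max' h2) = S1 ∪ S2.erase (S2.max' h2) := by
        rw [Finset.erase_union_distrib, Finset.erase_eq_of_notMem hm2S1]
      have hUne' : (S1 ∪ S2.erase (S2.max' h2)).Nonempty := h1.mono Finset.subset_union_left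
      have hcanonS2 : canon S2 h2
          = node (canon (S2.erase (S2.max' h2)) h2') (leaf (S2.max' h2)) := by
        rw [canon]; rw [dif_pos h2']
      have hcanonU : canon (S1 ∪ S2) hUne
          = node (canon (S1 ∪ S2.erase (S2.max' h2)) hUne') (leaf (S2.max' h2)) := by
        rw [canon]
        have e1 : ((S1 ∪ S2).erase ((S1 ∪ S2).max' hUne)) = S1 ∪ S2.erase (S2.max' h2) := by
          rw [hmaxU, heraseU]
        rw [dif_pos (by rw [e1]; exact hUne')]
        rw [canon_congr _ e1]
        congr 1
        exact congrArg leaf hmaxU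
      rw [hcanonS2, hcanonU]
      simp only [evalT_node, evalT_leaf, maxLeaf_canon]
      simp only [show (node (canon (S2.erase (S2.max' h2)) h2') (leaf (S2.max' h2))).maxLeaf
          = max ((S2.erase (S2.max' h2)).max' h2') (S2.max' h2) by
        simp [maxLeaf, maxLeaf_canon], show (leaf (n := n) (S2.max' h2)).maxLeaf
          = S2.max' h2 from rfl, max_eq_right hbm2.le]
      rcases lt_or_gt_of_ne hab with hlt' | hlt'
      · -- a < b
        have hmaxU' : (S1 ∪ S2.erase (S2.max' h2)).max' hUne'
            = (S2.erase (S2.max' h2)).max' h2' := by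
          refine le_antisymm (Finset.max'_le _ _ _ ?_) (Finset.le_max' _ _
            (Finset.mem_union_right _ hbS2))
          intro y hy
          rcases Finset.mem_union.1 hy with h | h
          · exact le_trans (Finset.le_max' _ _ h) hlt'.le
          · exact Finset.le_max' _ _ h
        rw [hmaxU', ← hE1 (S1.max' h1) ((S2.erase (S2.max' h2)).max' h2') (S2.max' h2)
          hab (ne_of_lt ham2) (ne_of_lt hbm2)]
        have hinner := ih S1 (S2.erase (S2.max' h2)) h1 h2' hcard' hdisj' hlt'
        rw [evalT_node, maxLeaf_canon, maxLeaf_canon] at hinner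
        rw [hinner]
      · -- b < a
        have hmaxU' : (S1 ∪ S2.erase (S2.max' h2)).max' hUne' = S1.max' h1 := by
          refine le_antisymm (Finset.max'_le _ _ _ ?_) (Finset.le_max' _ _
            (Finset.mem_union_left _ (S1.max'_mem h1)))
          intro y hy
          rcases Finset.mem_union.1 hy with h | h
          · exact Finset.le_max' _ _ h
          · exact le_trans (Finset.le_max' _ _ h) hlt'.le
        rw [hmaxU']
        rw [hE2 (S1.max' h1) ((S2.erase (S2.max' h2)).max' h2') (S2.max' h2)
          hab (ne_of_lt ham2) (ne_of_lt hbm2)]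
        rw [← hE1 ((S2.erase (S2.max' h2)).max' h2') (S1.max' h1) (S2.max' h2)
          (Ne.symm hab) (ne_of_lt hbm2) (ne_of_lt ham2)]
        have hinner := ih (S2.erase (S2.max' h2)) S1 h2' h1 (by omega) hdisj'.symm hlt'
        rw [evalT_node, maxLeaf_canon, maxLeaf_canon] at hinner
        rw [hinner, canon_congr _ (Finset.union_comm (S2.erase (S2.max' h2)) S1)]
    · -- S2 = {m2}
      have hcanonS2 : canon S2 h2 = leaf (S2.max' h2) := by
        rw [canon]; rw [dif_neg h2']
      have heraseU : (S1 ∪ S2).erase ((S1 ∪ S2).max' hUne) = S1 := by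
        rw [hmaxU, Finset.erase_union_distrib, Finset.erase_eq_of_notMem hm2S1]
        rw [show S2.erase (S2.max' h2) = ∅ from Finset.not_nonempty_iff_eq_empty.1 h2']
        exact Finset.union_empty S1
      have hcanonU : canon (S1 ∪ S2) hUne = node (canon S1 h1) (leaf (S2.max' h2)) := by
        rw [canon]
        rw [dif_pos (by rw [heraseU]; exact h1)]
        rw [canon_congr _ heraseU]
        congr 1
        exact congrArg leaf hmaxU
      rw [hcanonS2, hcanonU]

include hE1 hE2 in
theorem evalT_eq_canon : ∀ t : BTree n, t.Valid →
    evalT C x v t = evalT C x v (canon t.leaves t.leaves_nonempty) := by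
  intro t
  induction t with
  | leaf i =>
    intro _
    show evalT C x v (leaf i) = evalT C x v (canon {i} ⟨i, Finset.mem_singleton_self i⟩)
    exact (congrArg (evalT C x v) (canon_singleton' i _)).symm
  | node l r ihl ihr =>
    intro hv
    obtain ⟨hvl, hvr, hdisj, hlt⟩ := hv
    rw [evalT_node, ihl hvl, ihr hvr]
    have hstep : evalT C x v (node (canon l.leaves l.leaves_nonempty)
        (canon r.leaves r.leaves_nonempty)) = evalT C x v (canon (l.leaves ∪ r.leaves)
        (l.leaves_nonempty.mono Finset.subset_union_left)) := by
      apply merge_canon C x v hE1 hE2 (l.leaves.card + r.leaves.card) _ _ _ _ le_rfl hdisj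
      rw [← maxLeaf_eq_max', ← maxLeaf_eq_max']
      exact hlt
    rw [evalT_node, maxLeaf_canon, maxLeaf_canon, ← maxLeaf_eq_max', ← maxLeaf_eq_max']
      at hstep
    rw [hstep]
    rfl

include hE1 hE2 in
/-- coherence for `evalT`: any two valid trees with the same leaves give equal values. -/
theorem evalT_coherence {t t' : BTree n} (ht : t.Valid) (ht' : t'.Valid)
    (hl : t.leaves = t'.leaves) : evalT C x v t = evalT C x v t' := by
  rw [evalT_eq_canon C x v hE1 hE2 t ht, evalT_eq_canon C x v hE1 hE2 t' ht',
    canon_congr _ hl]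

end Merge


end BTree


theorem rank_pt {D : ℕ} (hD : 2 ≤ D) : 1 < Module.rank ℝ (Pt D) := by
  rw [← Module.finrank_eq_rank]
  norm_cast
  rw [finrank_euclideanSpace_fin]
  omega

theorem inj_snoc {D m : ℕ} {w : Fin m → Pt D} {z : Pt D}
    (hw : Function.Injective w) (hz : ∀ j, w j ≠ z) :
    Function.Injective (Fin.snoc w z : Fin (m+1) → Pt D) := by
  intro i j h
  induction i using Fin.lastCases with
  | last => induction j using Fin.lastCases with
    | last => rfl
    | cast j => simp only [Fin.snoc_last, Fin.snoc_castSucc] at h; exact absurd h.symm (hz j)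
  | cast i => induction j using Fin.lastCases with
    | last => simp only [Fin.snoc_last, Fin.snoc_castSucc] at h; exact absurd h (hz i)
    | cast j => simp only [Fin.snoc_castSucc] at h; exact congrArg Fin.castSucc (hw h)

theorem continuous_snoc {D m : ℕ} (z : Pt D) :
    Continuous (fun w : Fin m → Pt D => (Fin.snoc w z : Fin (m+1) → Pt D)) := by
  apply continuous_pi
  intro i
  induction i using Fin.lastCases with
  | last => simpa using continuous_const
  | cast i => simpa using continuous_apply i

/-- configuration space of `m` distinct points avoiding a countable set is path connected. -/
theorem config_pathConnected (D : ℕ) (hD : 2 ≤ D) :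
    ∀ (m : ℕ) (K : Set (Pt D)), K.Countable →
      IsPathConnected {x : Fin m → Pt D | Function.Injective x ∧ ∀ i, x i ∉ K} := by
  intro m
  induction m with
  | zero =>
    intro K hK
    have h0 : {x : Fin 0 → Pt D | Function.Injective x ∧ ∀ i, x i ∉ K} = Set.univ := by
      ext x
      simp only [Set.mem_setOf_eq, Set.mem_univ, iff_true]
      exact ⟨Function.injective_of_subsingleton x, fun i => i.elim0⟩
    rw [h0]
    exact (convex_univ : Convex ℝ (Set.univ : Set (Fin 0 → Pt D))).isPathConnected ⟨0, trivial⟩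
  | succ m ih =>
    intro K hK
    set s := {x : Fin (m+1) → Pt D | Function.Injective x ∧ ∀ i, x i ∉ K} with hs
    rw [isPathConnected_iff]
    constructor
    · -- nonempty
      obtain ⟨w, hw, -⟩ := ih K hK
      simp only [hs, Set.mem_setOf_eq] at hw
      obtain ⟨hw1, hw2⟩ := hw
      obtain ⟨z, hz, -⟩ := ((hK.union (Set.finite_range w).countable).isPathConnected_compl_of_one_lt_rank
        (rank_pt hD))
      simp only [Set.mem_compl_iff, Set.mem_union, not_or] at hz
      refine ⟨Fin.snoc w z, inj_snoc hw1 (fun j h => hz.2 ⟨j, h⟩), ?_⟩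
      intro i
      induction i using Fin.lastCases with
      | last => simpa using hz.1
      | cast i => simpa using hw2 i
    · intro x hx y hy
      simp only [hs, Set.mem_setOf_eq] at hx hy
      obtain ⟨hxinj, hxK⟩ := hx
      obtain ⟨hyinj, hyK⟩ := hy
      -- choose z avoiding everything
      obtain ⟨z, hz, -⟩ := ((hK.union ((Set.finite_range x).union (Set.finite_range y)).countable).isPathConnected_compl_of_one_lt_rank
        (rank_pt hD))
      simp only [Set.mem_compl_iff, Set.mem_union, not_or] at hz
      have hzK : z ∉ K := hz.1
      have hzx : ∀ j, x j ≠ z := fun j h => hz.2.1 ⟨j, h⟩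
      have hzy : ∀ j, y j ≠ z := fun j h => hz.2.2 ⟨j, h⟩
      -- step: move last coordinate of any config to z
      have step : ∀ u : Fin (m+1) → Pt D, Function.Injective u → (∀ i, u i ∉ K) →
          (∀ j, u j ≠ z) → JoinedIn s u (Function.update u (Fin.last m) z) := by
        intro u huinj huK hzu
        set A := K ∪ (u '' {i | i ≠ Fin.last m}) with hA
        have hAc : A.Countable := hK.union ((Set.finite_range u).subset
          (Set.image_subset_range _ _)).countable
        have hpath := hAc.isPathConnected_compl_of_one_lt_rank (rank_pt hD)
        have hu0 : u (Fin.last m) ∈ Aᶜ := by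
          simp only [Set.mem_compl_iff, hA, Set.mem_union, not_or, Set.mem_image]
          refine ⟨huK _, ?_⟩
          rintro ⟨i, hi, hieq⟩
          exact hi (huinj hieq)
        have hz0 : z ∈ Aᶜ := by
          simp only [Set.mem_compl_iff, hA, Set.mem_union, not_or, Set.mem_image]
          exact ⟨hzK, by rintro ⟨i, _, hieq⟩; exact hzu i hieq⟩
        obtain ⟨γ, hγ⟩ := hpath.joinedIn _ hu0 _ hz0
        have hcont : Continuous (fun w : Pt D => Function.update u (Fin.last m) w) :=
          continuous_const.update (Fin.last m) continuous_id
        refine ⟨(γ.map hcont).cast (Function.update_eq_self _ u).symm rfl, ?_⟩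
        intro t
        simp only [Path.cast_coe, Path.map_coe, Function.comp_apply]
        have hγt := hγ t
        simp only [Set.mem_compl_iff, hA, Set.mem_union, not_or, Set.mem_image] at hγt
        refine ⟨?_, ?_⟩
        · intro i j hij
          rcases eq_or_ne i (Fin.last m) with rfl | hi <;>
            rcases eq_or_ne j (Fin.last m) with rfl | hj
          · rfl
          · rw [Function.update_self, Function.update_of_ne hj] at hij
            exact absurd ⟨j, hj, hij.symm⟩ hγt.2
          · rw [Function.update_self, Function.update_of_ne hi] at hij
            exact absurd ⟨i, hi, hij⟩ hγt.2
          · rw [Function.update_of_ne hi, Function.update_of_ne hj] at hij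
            exact huinj hij
        · intro i
          rcases eq_or_ne i (Fin.last m) with rfl | hi
          · rw [Function.update_self]; exact hγt.1
          · rw [Function.update_of_ne hi]; exact huK i
      have hx' := step x hxinj hxK hzx
      have hy' := step y hyinj hyK hzy
      -- middle path
      have mid : JoinedIn s (Function.update x (Fin.last m) z)
          (Function.update y (Fin.last m) z) := by
        set K' := insert z K with hK'
        have hK'c : K'.Countable := hK.insert z
        set a := fun j : Fin m => x j.castSucc with ha
        set b := fun j : Fin m => y j.castSucc with hb
        have haM : a ∈ {x : Fin m → Pt D | Function.Injective x ∧ ∀ i, x i ∉ K'} := by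
          refine ⟨fun i j h => Fin.castSucc_injective m (hxinj h), fun i => ?_⟩
          simp only [hK', Set.mem_insert_iff, not_or]
          exact ⟨hzx _, hxK _⟩
        have hbM : b ∈ {x : Fin m → Pt D | Function.Injective x ∧ ∀ i, x i ∉ K'} := by
          refine ⟨fun i j h => Fin.castSucc_injective m (hyinj h), fun i => ?_⟩
          simp only [hK', Set.mem_insert_iff, not_or]
          exact ⟨hzy _, hyK _⟩
        obtain ⟨δ, hδ⟩ := (ih K' hK'c).joinedIn _ haM _ hbM
        have hGx : (Fin.snoc a z : Fin (m+1) → Pt D) = Function.update x (Fin.last m) z := by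
          funext i
          induction i using Fin.lastCases with
          | last => simp
          | cast i => simp [ha, Function.update_of_ne (Fin.castSucc_lt_last i).ne]
        have hGy : (Fin.snoc b z : Fin (m+1) → Pt D) = Function.update y (Fin.last m) z := by
          funext i
          induction i using Fin.lastCases with
          | last => simp
          | cast i => simp [hb, Function.update_of_ne (Fin.castSucc_lt_last i).ne]
        rw [← hGx, ← hGy]
        refine ⟨δ.map (continuous_snoc z), ?_⟩
        intro t
        simp only [Path.map_coe, Function.comp_apply]
        obtain ⟨hδinj, hδK⟩ := hδ t
        have hδz : ∀ j, δ t j ≠ z := fun j h => hδK j (by rw [h]; exact Set.mem_insert _ _)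
        refine ⟨inj_snoc hδinj hδz, ?_⟩
        intro i
        induction i using Fin.lastCases with
        | last => simpa using hzK
        | cast i =>
          simp only [Fin.snoc_castSucc]
          exact fun h => hδK i (Set.mem_insert_of_mem _ h)
      exact hx'.trans (mid.trans hy'.symm)

section D0
variable {D n : ℕ}
open BTree

theorem isOpen_pairs (A : Finset (Fin n)) (k l : Fin n) :
    IsOpen {x : Fin n → Pt D | ∀ i ∈ A, ∀ j ∈ A, i ≠ j →
      dist (x i) (x j) < dist (x k) (x l)} := by
  have he : {x : Fin n → Pt D | ∀ i ∈ A, ∀ j ∈ A, i ≠ j → dist (x i) (x j) < dist (x k) (x l)}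
      = ⋂ i ∈ A, ⋂ j ∈ A, {x | i ≠ j → dist (x i) (x j) < dist (x k) (x l)} := by
    ext x; simp
  rw [he]
  refine isOpen_biInter_finset fun i _ => isOpen_biInter_finset fun j _ => ?_
  by_cases hij : i = j
  · convert isOpen_univ using 1
    ext x; simp [hij]
  · have he2 : {x : Fin n → Pt D | i ≠ j → dist (x i) (x j) < dist (x k) (x l)}
        = {x | dist (x i) (x j) < dist (x k) (x l)} := by ext x; simp [hij]
    rw [he2]
    exact isOpen_lt (Continuous.dist (continuous_apply i) (continuous_apply j))
      (Continuous.dist (continuous_apply k) (continuous_apply l))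

theorem isOpen_inDom (t : BTree n) : IsOpen {x : Fin n → Pt D | InDom x t} := by
  induction t with
  | leaf i =>
    have he : {x : Fin n → Pt D | InDom x (leaf i)} = Set.univ := by
      ext x; simp [InDom]
    rw [he]; exact isOpen_univ
  | node l r ihl ihr =>
    have he : {x : Fin n → Pt D | InDom x (node l r)}
        = ({x | InDom x l} ∩ {x | InDom x r})
          ∩ ({x : Fin n → Pt D | ∀ i ∈ l.leaves, ∀ j ∈ l.leaves, i ≠ j →
              dist (x i) (x j) < dist (x l.maxLeaf) (x r.maxLeaf)}
            ∩ {x : Fin n → Pt D | ∀ i ∈ r.leaves, ∀ j ∈ r.leaves, i ≠ j →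
              dist (x i) (x j) < dist (x l.maxLeaf) (x r.maxLeaf)}) := by
      ext x
      show InDom x (node l r) ↔ _
      rw [show InDom x (node l r) = (InDom x l ∧ InDom x r ∧ _ ∧ _) from rfl]
      simp only [Set.mem_inter_iff, Set.mem_setOf_eq]
      tauto
    rw [he]
    exact ((ihl.inter ihr).inter ((isOpen_pairs _ _ _).inter (isOpen_pairs _ _ _)))

theorem isOpen_inj : IsOpen {x : Fin n → Pt D | Function.Injective x} := by
  have he : {x : Fin n → Pt D | Function.Injective x}
      = ⋂ p : Fin n × Fin n, {x | p.1 ≠ p.2 → x p.1 ≠ x p.2} := by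
    ext x
    simp only [Set.mem_setOf_eq, Set.mem_iInter]
    constructor
    · intro hx p hp h; exact hp (hx h)
    · intro h i j hij
      by_contra hne
      exact h (i, j) hne hij
  rw [he]
  refine isOpen_iInter_of_finite fun p => ?_
  by_cases hp : p.1 = p.2
  · convert isOpen_univ using 1; ext x; simp [hp]
  · have he2 : {x : Fin n → Pt D | p.1 ≠ p.2 → x p.1 ≠ x p.2}
        = {x | x p.1 ≠ x p.2} := by ext x; simp [hp]
    rw [he2]
    exact isOpen_ne_fun (continuous_apply p.1) (continuous_apply p.2)

end D0

section E0
open BTree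
variable {D n : ℕ}

theorem inDom_congr {x x' : Fin n → Pt D} : ∀ t : BTree n,
    (∀ i ∈ t.leaves, x i = x' i) → InDom x t → InDom x' t := by
  intro t
  induction t with
  | leaf i => intro _ _; trivial
  | node l r ihl ihr =>
    intro h hd
    obtain ⟨h1, h2, h3, h4⟩ := hd
    have hl : ∀ i ∈ l.leaves, x i = x' i := fun i hi =>
      h i (Finset.mem_union_left _ hi)
    have hr : ∀ i ∈ r.leaves, x i = x' i := fun i hi =>
      h i (Finset.mem_union_right _ hi)
    refine ⟨ihl hl h1, ihr hr h2, ?_, ?_⟩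
    · intro i hi j hj hij
      rw [← hl i hi, ← hl j hj, ← hl _ l.maxLeaf_mem, ← hr _ r.maxLeaf_mem]
      exact h3 i hi j hj hij
    · intro i hi j hj hij
      rw [← hr i hi, ← hr j hj, ← hl _ l.maxLeaf_mem, ← hr _ r.maxLeaf_mem]
      exact h4 i hi j hj hij

theorem inDom_affine {x : Fin n → Pt D} (p : Pt D) {c : ℝ} (hc : 0 < c) :
    ∀ t : BTree n, InDom x t → InDom (fun i => p + c • x i) t := by
  intro t
  have hdist : ∀ a b : Pt D, dist (p + c • a) (p + c • b) = c * dist a b := by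
    intro a b
    rw [dist_add_left, dist_smul₀, Real.norm_of_nonneg hc.le]
  induction t with
  | leaf i => intro _; trivial
  | node l r ihl ihr =>
    rintro ⟨h1, h2, h3, h4⟩
    refine ⟨ihl h1, ihr h2, ?_, ?_⟩
    · intro i hi j hj hij
      rw [hdist, hdist]
      exact (mul_lt_mul_iff_right₀ hc).2 (h3 i hi j hj hij)
    · intro i hi j hj hij
      rw [hdist, hdist]
      exact (mul_lt_mul_iff_right₀ hc).2 (h4 i hi j hj hij)

theorem exists_inDom (hD : 1 ≤ D) : ∀ t : BTree n, t.Valid →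
    ∃ x : Fin n → Pt D, Set.InjOn x t.leaves ∧ InDom x t ∧ ∀ i ∈ t.leaves, ‖x i‖ ≤ 1 := by
  intro t
  induction t with
  | leaf i =>
    intro _
    refine ⟨0, ?_, trivial, fun j _ => by simp⟩
    intro a ha b hb _
    have ha' : a = i := Finset.mem_singleton.1 (Finset.mem_coe.1 ha)
    have hb' : b = i := Finset.mem_singleton.1 (Finset.mem_coe.1 hb)
    rw [ha', hb']
  | node l r ihl ihr =>
    rintro ⟨hvl, hvr, hdisj, hlt⟩
    obtain ⟨y, hyinj, hydom, hybd⟩ := ihl hvl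
    obtain ⟨z, hzinj, hzdom, hzbd⟩ := ihr hvr
    set c : ℝ := 1/16 with hc
    set p : Pt D := EuclideanSpace.single (⟨0, hD⟩ : Fin D) ((1:ℝ)/2) with hp
    have hpnorm : ‖p‖ = 1/2 := by
      rw [hp, EuclideanSpace.norm_single]
      norm_num
    classical
    set x : Fin n → Pt D := fun i => if i ∈ l.leaves then c • y i else p + c • z i with hx
    have hxl : ∀ i ∈ l.leaves, x i = c • y i := fun i hi => by
      simp only [hx, if_pos hi]
    have hxr : ∀ i ∈ r.leaves, x i = p + c • z i := fun i hi => by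
      have : i ∉ l.leaves := Finset.disjoint_right.1 hdisj hi
      simp only [hx, if_neg this]
    have hxlnorm : ∀ i ∈ l.leaves, ‖x i‖ ≤ 1/16 := by
      intro i hi
      rw [hxl i hi, norm_smul, hc]
      have := hybd i hi
      rw [Real.norm_of_nonneg (by norm_num : (0:ℝ) ≤ 1/16)]
      nlinarith
    have hxrdist : ∀ i ∈ r.leaves, dist (x i) p ≤ 1/16 := by
      intro i hi
      rw [hxr i hi, dist_comm, dist_self_add_right, norm_smul, hc]
      have := hzbd i hi
      rw [Real.norm_of_nonneg (by norm_num : (0:ℝ) ≤ 1/16)]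
      nlinarith
    -- distance between the two clusters
    have hcross : ∀ i ∈ l.leaves, ∀ j ∈ r.leaves, 3/8 ≤ dist (x i) (x j) := by
      intro i hi j hj
      have h4 := dist_triangle4 (0 : Pt D) (x i) (x j) p
      have h0 : dist (0 : Pt D) p = 1/2 := by rw [dist_zero_left, hpnorm]
      have h1 : dist (0 : Pt D) (x i) ≤ 1/16 := by
        rw [dist_zero_left]; exact hxlnorm i hi
      have h2 : dist (x j) p ≤ 1/16 := hxrdist j hj
      linarith
    -- intra-cluster distances
    have hintra_l : ∀ i ∈ l.leaves, ∀ j ∈ l.leaves, dist (x i) (x j) ≤ 1/8 := by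
      intro i hi j hj
      have ht : dist (x i) (x j) ≤ ‖x i‖ + ‖x j‖ := by
        simpa [dist_zero_right, dist_zero_left] using dist_triangle (x i) 0 (x j)
      have h1 := hxlnorm i hi
      have h2 := hxlnorm j hj
      linarith
    have hintra_r : ∀ i ∈ r.leaves, ∀ j ∈ r.leaves, dist (x i) (x j) ≤ 1/8 := by
      intro i hi j hj
      have h1 := hxrdist i hi
      have h2 := hxrdist j hj
      have := dist_triangle (x i) p (x j)
      rw [dist_comm p (x j)] at this
      linarith
    have hmaxl : l.maxLeaf ∈ l.leaves := l.maxLeaf_mem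
    have hmaxr : r.maxLeaf ∈ r.leaves := r.maxLeaf_mem
    have hroot : (3:ℝ)/8 ≤ dist (x l.maxLeaf) (x r.maxLeaf) := hcross _ hmaxl _ hmaxr
    refine ⟨x, ?_, ⟨?_, ?_, ?_, ?_⟩, ?_⟩
    · -- injectivity on leaves
      intro a ha b hb hab
      rcases Finset.mem_union.1 ha with ha' | ha' <;>
        rcases Finset.mem_union.1 hb with hb' | hb'
      · apply hyinj ha' hb'
        rw [hxl a ha', hxl b hb'] at hab
        exact smul_right_injective _ (by norm_num [hc]) hab
      · exfalso
        have := hcross a ha' b hb'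
        rw [hab] at this
        simp at this
        linarith
      · exfalso
        have := hcross b hb' a ha'
        rw [hab] at this
        simp at this
        linarith
      · apply hzinj ha' hb'
        rw [hxr a ha', hxr b hb'] at hab
        have := add_left_cancel hab
        exact smul_right_injective _ (by norm_num [hc]) this
    · -- InDom x l
      refine inDom_congr l (fun i hi => ?_) (inDom_affine 0 (by norm_num [hc] : (0:ℝ) < c) l hydom)
      rw [hxl i hi, zero_add]
    · -- InDom x r
      refine inDom_congr r (fun i hi => ?_) (inDom_affine p (by norm_num [hc] : (0:ℝ) < c) r hzdom)
      rw [hxr i hi]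
    · intro i hi j hj hij
      have := hintra_l i hi j hj
      linarith
    · intro i hi j hj hij
      have := hintra_r i hi j hj
      linarith
    · intro i hi
      rcases Finset.mem_union.1 hi with hi' | hi'
      · have := hxlnorm i hi'; linarith
      · have h1 := hxrdist i hi'
        have ht : ‖x i‖ ≤ dist (x i) p + ‖p‖ := by
          simpa [dist_zero_right, dist_zero_left] using dist_triangle (x i) p 0
        rw [hpnorm] at ht
        linarith
end E0

section F0
open BTree

theorem evalT_analyticAt {D n : ℕ} {V : Type*} [NormedAddCommGroup V] [NormedSpace ℂ V]
    (C : Pt D → Pt D → (V →L[ℂ] V →L[ℂ] V))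
    (hCa : AnalyticOnNhd ℝ (fun p : Pt D × Pt D => C p.1 p.2) {p | p.1 ≠ p.2})
    (v : Fin n → V) : ∀ t : BTree n, t.Valid → ∀ x : Fin n → Pt D,
      Function.Injective x → AnalyticAt ℝ (fun x' => evalT C x' v t) x := by
  intro t
  induction t with
  | leaf i => intro _ x _; exact analyticAt_const
  | node l r ihl ihr =>
    rintro ⟨hvl, hvr, hdisj, hlt⟩ x hx
    have hp1 : AnalyticAt ℝ (fun x' : Fin n → Pt D => x' l.maxLeaf) x :=
      ((ContinuousLinearMap.proj (R := ℝ) (φ := fun _ : Fin n => Pt D) l.maxLeaf)).analyticAt x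
    have hp2 : AnalyticAt ℝ (fun x' : Fin n → Pt D => x' r.maxLeaf) x :=
      ((ContinuousLinearMap.proj (R := ℝ) (φ := fun _ : Fin n => Pt D) r.maxLeaf)).analyticAt x
    have hC : AnalyticAt ℝ (fun x' : Fin n → Pt D => C (x' l.maxLeaf) (x' r.maxLeaf)) x :=
      AnalyticAt.comp₂ (hCa (x l.maxLeaf, x r.maxLeaf) (hx.ne hlt.ne)) hp1 hp2
    exact (hC.capply (ihl hvl x hx)).capply (ihr hvr x hx)

theorem F_eq_evalT {D : ℕ} (hD : 2 ≤ D) {V : Type*} [NormedAddCommGroup V] [NormedSpace ℂ V]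
    [CompleteSpace V]
    (C : Pt D → Pt D → (V →L[ℂ] V →L[ℂ] V))
    (hCa : AnalyticOnNhd ℝ (fun p : Pt D × Pt D => C p.1 p.2) {p | p.1 ≠ p.2})
    (F : (m : ℕ) → BTree m → (Fin m → Pt D) → ContinuousMultilinearMap ℂ (fun _ : Fin m => V) V)
    (hFa : ∀ m, 2 ≤ m → ∀ t : BTree m, t.Valid → t.leaves = Finset.univ →
      AnalyticOnNhd ℝ (F m t) {x | Function.Injective x})
    (hFagree : ∀ m, 2 ≤ m → ∀ t : BTree m, t.Valid → t.leaves = Finset.univ →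
      ∀ x : Fin m → Pt D, Function.Injective x → BTree.InDom x t →
        ∀ v : Fin m → V, F m t x v = BTree.evalT C x v t) :
    ∀ m, 2 ≤ m → ∀ t : BTree m, t.Valid → t.leaves = Finset.univ →
      ∀ x : Fin m → Pt D, Function.Injective x → ∀ v : Fin m → V,
        F m t x v = evalT C x v t := by
  intro m hm t ht htl x hx v
  set U : Set (Fin m → Pt D) := {x | Function.Injective x} with hU
  have hUconn : IsPreconnected U := by
    have hpc := config_pathConnected D hD m ∅ Set.countable_empty
    have heq : {x : Fin m → Pt D | Function.Injective x ∧ ∀ i, x i ∉ (∅ : Set (Pt D))}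
        = U := by ext x'; simp [hU]
    rw [heq] at hpc
    exact hpc.isConnected.isPreconnected
  obtain ⟨x₀, hx₀inj, hx₀dom, _⟩ := exists_inDom (le_trans (by norm_num) hD) t ht
  have hx₀inj' : Function.Injective x₀ := by
    rw [htl] at hx₀inj
    intro a b hab
    exact hx₀inj (by simp) (by simp) hab
  have hg : AnalyticOnNhd ℝ (fun x' => F m t x' v) U := by
    intro x' hx'
    exact (analyticAt_const (v := ContinuousMultilinearMap.apply ℂ (fun _ : Fin m => V) V v)).capply
      (hFa m hm t ht htl x' hx')
  have hh : AnalyticOnNhd ℝ (fun x' => evalT C x' v t) U := fun x' hx' =>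
    evalT_analyticAt C hCa v t ht x' hx'
  have hopen : IsOpen (U ∩ {x' | InDom x' t}) := isOpen_inj.inter (isOpen_inDom t)
  have hx₀mem : x₀ ∈ U ∩ {x' | InDom x' t} := ⟨hx₀inj', hx₀dom⟩
  have heqev : (fun x' => F m t x' v) =ᶠ[nhds x₀] (fun x' => evalT C x' v t) := by
    filter_upwards [hopen.mem_nhds hx₀mem] with x' hx'
    exact hFagree m hm t ht htl x' hx'.1 hx'.2 v
  exact hg.eqOn_of_preconnected_of_eventuallyEq hh hUconn hx₀mem.1 heqev hx

end F0

section G0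
open BTree

def T_a : BTree 3 := .node (.node (.leaf 0) (.leaf 1)) (.leaf 2)
def T_b : BTree 3 := .node (.leaf 0) (.node (.leaf 1) (.leaf 2))
def T_c : BTree 3 := .node (.leaf 1) (.node (.leaf 0) (.leaf 2))

theorem Ta_valid : T_a.Valid := ⟨⟨trivial, trivial, by decide, by decide⟩, trivial, by decide, by decide⟩
theorem Tb_valid : T_b.Valid := ⟨trivial, ⟨trivial, trivial, by decide, by decide⟩, by decide, by decide⟩
theorem Tc_valid : T_c.Valid := ⟨trivial, ⟨trivial, trivial, by decide, by decide⟩, by decide, by decide⟩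
theorem Ta_leaves : T_a.leaves = Finset.univ := by decide
theorem Tb_leaves : T_b.leaves = Finset.univ := by decide
theorem Tc_leaves : T_c.leaves = Finset.univ := by decide

end G0

/-- Coherence Theorem: if each tree expression `f_T` (defined on `D[T]` from
the 2-point coefficient `C`) extends to a real-analytic function `F_T` on all of `M_m`, and
the three extensions coincide for the three binary trees on `{1,2,3}`, then the extensions
coincide for any two binary trees on `{1, …, n}`, for every `n ≥ 2`. -/
theorem stmt8 {D : ℕ} (hD : 2 ≤ D) {V : Type*} [NormedAddCommGroup V] [NormedSpace ℂ V]
    [CompleteSpace V]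
    (C : Pt D → Pt D → (V →L[ℂ] V →L[ℂ] V))
    (hCa : AnalyticOnNhd ℝ (fun p : Pt D × Pt D => C p.1 p.2) {p | p.1 ≠ p.2})
    (F : (m : ℕ) → BTree m → (Fin m → Pt D) → ContinuousMultilinearMap ℂ (fun _ : Fin m => V) V)
    (hFa : ∀ m, 2 ≤ m → ∀ t : BTree m, t.Valid → t.leaves = Finset.univ →
      AnalyticOnNhd ℝ (F m t) {x | Function.Injective x})
    (hFagree : ∀ m, 2 ≤ m → ∀ t : BTree m, t.Valid → t.leaves = Finset.univ →
      ∀ x : Fin m → Pt D, Function.Injective x → BTree.InDom x t →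
        ∀ v : Fin m → V, F m t x v = BTree.evalT C x v t)
    (h3 : ∀ t t' : BTree 3, t.Valid → t.leaves = Finset.univ →
      t'.Valid → t'.leaves = Finset.univ →
      ∀ x : Fin 3 → Pt D, Function.Injective x → F 3 t x = F 3 t' x)
    (n : ℕ) (hn : 2 ≤ n) (t t' : BTree n)
    (ht : t.Valid) (htl : t.leaves = Finset.univ)
    (ht' : t'.Valid) (htl' : t'.leaves = Finset.univ)
    (x : Fin n → Pt D) (hx : Function.Injective x) :
    F n t x = F n t' x := by
  have key := F_eq_evalT hD C hCa F hFa hFagree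
  have hEgen : ∀ ta tb : BTree 3, ta.Valid → ta.leaves = Finset.univ →
      tb.Valid → tb.leaves = Finset.univ → ∀ x3 : Fin 3 → Pt D, Function.Injective x3 →
      ∀ v3 : Fin 3 → V, BTree.evalT C x3 v3 ta = BTree.evalT C x3 v3 tb := by
    intro ta tb h1 h2 h3' h4 x3 hx3 v3
    rw [← key 3 (by norm_num) ta h1 h2 x3 hx3 v3, ← key 3 (by norm_num) tb h3' h4 x3 hx3 v3,
      h3 ta tb h1 h2 h3' h4 x3 hx3]
  have inj3 : ∀ p q r : Fin n, p ≠ q → p ≠ r → q ≠ r →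
      Function.Injective ![x p, x q, x r] := by
    intro p q r hpq hpr hqr a b hab
    fin_cases a <;> fin_cases b <;>
      first
        | rfl
        | exact absurd (hx hab) hpq
        | exact absurd (hx hab) hpr
        | exact absurd (hx hab) hqr
        | exact absurd (hx hab).symm hpq
        | exact absurd (hx hab).symm hpr
        | exact absurd (hx hab).symm hqr
  have hE1 : ∀ p q r : Fin n, p ≠ q → p ≠ r → q ≠ r → ∀ u w z : V,
      C (x q) (x r) (C (x p) (x q) u w) z = C (x p) (x r) u (C (x q) (x r) w z) := by
    intro p q r hpq hpr hqr u w z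
    exact hEgen T_a T_b Ta_valid Ta_leaves Tb_valid Tb_leaves ![x p, x q, x r]
      (inj3 p q r hpq hpr hqr) ![u, w, z]
  have hE2 : ∀ p q r : Fin n, p ≠ q → p ≠ r → q ≠ r → ∀ u w z : V,
      C (x p) (x r) u (C (x q) (x r) w z) = C (x q) (x r) w (C (x p) (x r) u z) := by
    intro p q r hpq hpr hqr u w z
    exact hEgen T_b T_c Tb_valid Tb_leaves Tc_valid Tc_leaves ![x p, x q, x r]
      (inj3 p q r hpq hpr hqr) ![u, w, z]
  apply ContinuousMultilinearMap.ext
  intro v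
  rw [key n hn t ht htl x hx v, key n hn t' ht' htl' x hx v]
  exact BTree.evalT_coherence C x v hE1 hE2 ht ht' (by rw [htl, htl'])
end
end

section
/- Let A be an associative algebra over ℂ with product m_0(A,B) = A·B, let i ≥ 1, and let m_1,…,m_{i−1} : A × A → A be bilinear maps. For 1 ≤ j ≤ i define the trilinear map w_j(A,B,C) := −Σ_{k=1}^{j−1} [ m_{j−k}(A, m_k(B,C)) − m_{j−k}(m_k(A,B), C) ] (so w_1 = 0). Suppose for each 1 ≤ j ≤ i−1 the j-th order deformation equation holds: A·m_j(B,C) − m_j(A·B, C) + m_j(A, B·C) − m_j(A,B)·C = w_j(A,B,C) for all A, B, C ∈ A (i.e. d m_j = w_j for the Hochschild coboundary d). Then d w_i = 0, i.e. w_i is a Hochschild 3-cocycle: A_1·w_i(A_2,A_3,A_4) − w_i(A_1·A_2, A_3, A_4) + w_i(A_1, A_2·A_3, A_4) − w_i(A_1, A_2, A_3·A_4) + w_i(A_1,A_2,A_3)·A_4 = 0 for all A_1,…,A_4 ∈ A. In particular, the obstruction to extending an order-(i−1) formal associative deformation of A to order i is a Hochschild 3-cocycle. -/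
/-- The inhomogeneity `w_j(A,B,C) = −Σ_{k=1}^{j−1} [ m_{j−k}(A, m_k(B,C)) − m_{j−k}(m_k(A,B), C) ]`
built from the lower order deformations of the product. -/
def wDef {A : Type*} [Ring A] [Algebra ℂ A] (ms : ℕ → A → A → A) (j : ℕ) (a b c : A) : A :=
  - ∑ k ∈ Finset.Ioo 0 j, (ms (j - k) a (ms k b c) - ms (j - k) (ms k a b) c)

/-- Extended family: `n 0` is the product, `n k = ms k` for `0 < k < i`, and `0` beyond. -/
def nnn {A : Type*} [Ring A] (i : ℕ) (ms : ℕ → A → A → A) (k : ℕ) (a b : A) : A :=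
  if k = 0 then a * b else if k < i then ms k a b else 0

/-- Graded associator of the family `n`. -/
def Ph {A : Type*} [Ring A] (n : ℕ → A → A → A) (k : ℕ) (x y z : A) : A :=
  ∑ rs ∈ Finset.HasAntidiagonal.antidiagonal k, (n rs.1 (n rs.2 x y) z - n rs.1 x (n rs.2 y z))

lemma hom_sum_sub {A : Type*} [Ring A] {ι : Type*} (F : A → A)
    (hF : ∀ x y, F (x + y) = F x + F y) (S : Finset ι) (f g : ι → A) :
    F (∑ x ∈ S, (f x - g x)) = ∑ x ∈ S, (F (f x) - F (g x)) := by
  let φ : A →+ A := AddMonoidHom.mk' F hF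
  show φ _ = _
  rw [map_sum]
  exact Finset.sum_congr rfl fun x _ => map_sub φ _ _

lemma tripswap {A : Type*} [Ring A] {i : ℕ} (f : ℕ → ℕ → ℕ → A) :
    ∑ pq ∈ Finset.HasAntidiagonal.antidiagonal i, ∑ rs ∈ Finset.HasAntidiagonal.antidiagonal pq.1, f rs.1 rs.2 pq.2
      = ∑ pq ∈ Finset.HasAntidiagonal.antidiagonal i, ∑ rs ∈ Finset.HasAntidiagonal.antidiagonal pq.2, f pq.1 rs.1 rs.2 := by
  rw [Finset.sum_sigma', Finset.sum_sigma']
  refine Finset.sum_nbij' (fun x => ⟨(x.2.1, x.2.2 + x.1.2), (x.2.2, x.1.2)⟩)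
    (fun y => ⟨(y.1.1 + y.2.1, y.2.2), (y.1.1, y.2.1)⟩) ?_ ?_ ?_ ?_ ?_
  · rintro ⟨⟨p, q⟩, r, s⟩ h
    simp at h ⊢
    omega
  · rintro ⟨⟨p, q⟩, r, s⟩ h
    simp at h ⊢
    omega
  · rintro ⟨⟨p, q⟩, r, s⟩ h
    simp at h
    have : p = r + s := by omega
    subst this; rfl
  · rintro ⟨⟨p, q⟩, r, s⟩ h
    simp at h
    have : q = r + s := by omega
    subst this; rfl
  · rintro ⟨⟨p, q⟩, r, s⟩ h
    rfl

lemma range_split {k : ℕ} (hk : 1 ≤ k) :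
    Finset.range (k + 1) = insert 0 (insert k (Finset.Ioo 0 k)) := by
  ext x
  simp only [Finset.mem_range, Finset.mem_insert, Finset.mem_Ioo]
  omega

lemma Ph_eq {A : Type*} [Ring A] (n : ℕ → A → A → A) {k : ℕ} (hk : 1 ≤ k) (x y z : A) :
    Ph n k x y z = (n k (n 0 x y) z - n k x (n 0 y z))
      + ((n 0 (n k x y) z - n 0 x (n k y z))
        + ∑ t ∈ Finset.Ioo 0 k, (n (k - t) (n t x y) z - n (k - t) x (n t y z))) := by
  rw [Ph, ← Finset.Nat.sum_antidiagonal_swap, Finset.Nat.sum_antidiagonal_eq_sum_range_succ_mk,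
    range_split hk, Finset.sum_insert (by simp; omega), Finset.sum_insert (by simp)]
  simp

lemma pentagon {A : Type*} [Ring A] (n : ℕ → A → A → A)
    (hL : ∀ k c x y, n k (x + y) c = n k x c + n k y c)
    (hR : ∀ k a x y, n k a (x + y) = n k a x + n k a y)
    (i : ℕ) (a₁ a₂ a₃ a₄ : A) :
    ∑ pq ∈ Finset.HasAntidiagonal.antidiagonal i,
      (n pq.1 (Ph n pq.2 a₁ a₂ a₃) a₄
        - Ph n pq.1 (n pq.2 a₁ a₂) a₃ a₄
        + Ph n pq.1 a₁ (n pq.2 a₂ a₃) a₄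
        - Ph n pq.1 a₁ a₂ (n pq.2 a₃ a₄)
        + n pq.1 a₁ (Ph n pq.2 a₂ a₃ a₄)) = 0 := by
  have step : ∀ pq ∈ Finset.HasAntidiagonal.antidiagonal i,
      (n pq.1 (Ph n pq.2 a₁ a₂ a₃) a₄
        - Ph n pq.1 (n pq.2 a₁ a₂) a₃ a₄
        + Ph n pq.1 a₁ (n pq.2 a₂ a₃) a₄
        - Ph n pq.1 a₁ a₂ (n pq.2 a₃ a₄)
        + n pq.1 a₁ (Ph n pq.2 a₂ a₃ a₄))
      = ((∑ rs ∈ Finset.HasAntidiagonal.antidiagonal pq.2,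
            (n pq.1 (n rs.1 (n rs.2 a₁ a₂) a₃) a₄ - n pq.1 (n rs.1 a₁ (n rs.2 a₂ a₃)) a₄))
        - (∑ rs ∈ Finset.HasAntidiagonal.antidiagonal pq.1,
            (n rs.1 (n rs.2 (n pq.2 a₁ a₂) a₃) a₄ - n rs.1 (n pq.2 a₁ a₂) (n rs.2 a₃ a₄)))
        + (∑ rs ∈ Finset.HasAntidiagonal.antidiagonal pq.1,
            (n rs.1 (n rs.2 a₁ (n pq.2 a₂ a₃)) a₄ - n rs.1 a₁ (n rs.2 (n pq.2 a₂ a₃) a₄)))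
        - (∑ rs ∈ Finset.HasAntidiagonal.antidiagonal pq.1,
            (n rs.1 (n rs.2 a₁ a₂) (n pq.2 a₃ a₄) - n rs.1 a₁ (n rs.2 a₂ (n pq.2 a₃ a₄))))
        + (∑ rs ∈ Finset.HasAntidiagonal.antidiagonal pq.2,
            (n pq.1 a₁ (n rs.1 (n rs.2 a₂ a₃) a₄) - n pq.1 a₁ (n rs.1 a₂ (n rs.2 a₃ a₄))))) := by
    intro pq _
    have e1 : n pq.1 (Ph n pq.2 a₁ a₂ a₃) a₄
        = ∑ rs ∈ Finset.HasAntidiagonal.antidiagonal pq.2,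
            (n pq.1 (n rs.1 (n rs.2 a₁ a₂) a₃) a₄ - n pq.1 (n rs.1 a₁ (n rs.2 a₂ a₃)) a₄) :=
      hom_sum_sub (fun a => n pq.1 a a₄) (fun x y => hL pq.1 a₄ x y) _ _ _
    have e5 : n pq.1 a₁ (Ph n pq.2 a₂ a₃ a₄)
        = ∑ rs ∈ Finset.HasAntidiagonal.antidiagonal pq.2,
            (n pq.1 a₁ (n rs.1 (n rs.2 a₂ a₃) a₄) - n pq.1 a₁ (n rs.1 a₂ (n rs.2 a₃ a₄))) :=
      hom_sum_sub (fun a => n pq.1 a₁ a) (fun x y => hR pq.1 a₁ x y) _ _ _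
    rw [e1, e5]; rfl
  rw [Finset.sum_congr rfl step]
  simp only [Finset.sum_sub_distrib, Finset.sum_add_distrib]
  have t2a := tripswap (i := i) (fun u v w => n u (n v (n w a₁ a₂) a₃) a₄)
  have t2b := tripswap (i := i) (fun u v w => n u (n w a₁ a₂) (n v a₃ a₄))
  have t3a := tripswap (i := i) (fun u v w => n u (n v a₁ (n w a₂ a₃)) a₄)
  have t3b := tripswap (i := i) (fun u v w => n u a₁ (n v (n w a₂ a₃) a₄))
  have t4a := tripswap (i := i) (fun u v w => n u (n v a₁ a₂) (n w a₃ a₄))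
  have t4b := tripswap (i := i) (fun u v w => n u a₁ (n v a₂ (n w a₃ a₄)))
  rw [t2a, t2b, t3a, t3b, t4a, t4b]
  have fixswap : ∀ pq : ℕ × ℕ,
      (∑ rs ∈ Finset.HasAntidiagonal.antidiagonal pq.2, n pq.1 (n rs.2 a₁ a₂) (n rs.1 a₃ a₄))
        = ∑ rs ∈ Finset.HasAntidiagonal.antidiagonal pq.2, n pq.1 (n rs.1 a₁ a₂) (n rs.2 a₃ a₄) := by
    intro pq
    exact Finset.Nat.sum_antidiagonal_swap (f := fun rs => n pq.1 (n rs.1 a₁ a₂) (n rs.2 a₃ a₄))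
  rw [Finset.sum_congr rfl fun pq _ => fixswap pq]
  abel


/-- if the deformation equations `d m_j = w_j` hold for `1 ≤ j ≤ i−1`, then
`w_i` is a Hochschild 3-cocycle, `d w_i = 0`; i.e. the obstruction to extending an
order-`(i−1)` formal associative deformation to order `i` is a Hochschild 3-cocycle. -/
theorem stmt10 {A : Type*} [Ring A] [Algebra ℂ A]
    (i : ℕ) (hi : 1 ≤ i)
    (ms : ℕ → A → A → A)
    (hbil : ∀ j, 1 ≤ j → j < i →
      (∀ b : A, IsLinearMap ℂ fun a => ms j a b) ∧ (∀ a : A, IsLinearMap ℂ (ms j a)))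
    (hdef : ∀ j, 1 ≤ j → j < i → ∀ a b c : A,
      a * ms j b c - ms j (a * b) c + ms j a (b * c) - ms j a b * c = wDef ms j a b c)
    (a₁ a₂ a₃ a₄ : A) :
    a₁ * wDef ms i a₂ a₃ a₄ - wDef ms i (a₁ * a₂) a₃ a₄ + wDef ms i a₁ (a₂ * a₃) a₄
      - wDef ms i a₁ a₂ (a₃ * a₄) + wDef ms i a₁ a₂ a₃ * a₄ = 0 := by
  set n : ℕ → A → A → A := nnn i ms with hn
  have hn0 : ∀ a b : A, n 0 a b = a * b := by intro a b; simp [hn, nnn]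
  have hni : ∀ a b : A, n i a b = 0 := by
    intro a b; simp only [hn, nnn]; rw [if_neg (by omega), if_neg (by omega)]
  have hnk : ∀ k, 1 ≤ k → k < i → ∀ a b : A, n k a b = ms k a b := by
    intro k h1 h2 a b; simp only [hn, nnn]; rw [if_neg (by omega), if_pos h2]
  have hL : ∀ k c x y, n k (x + y) c = n k x c + n k y c := by
    intro k c x y
    simp only [hn, nnn]
    split_ifs with h1 h2
    · exact add_mul x y c
    · exact ((hbil k (by omega) h2).1 c).map_add x y
    · exact (add_zero 0).symm
  have hR : ∀ k a x y, n k a (x + y) = n k a x + n k a y := by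
    intro k a x y
    simp only [hn, nnn]
    split_ifs with h1 h2
    · exact mul_add a x y
    · exact ((hbil k (by omega) h2).2 a).map_add x y
    · exact (add_zero 0).symm
  have hLzero : ∀ k c, n k 0 c = 0 := by
    intro k c
    simp only [hn, nnn]
    split_ifs with h1 h2
    · exact zero_mul c
    · exact ((hbil k (by omega) h2).1 c).map_zero
    · rfl
  -- the middle part of `Ph` is `wDef`
  have hmid : ∀ k, 1 ≤ k → k ≤ i → ∀ x y z : A,
      (∑ t ∈ Finset.Ioo 0 k, (n (k - t) (n t x y) z - n (k - t) x (n t y z)))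
        = wDef ms k x y z := by
    intro k h1 h2 x y z
    have : ∀ t ∈ Finset.Ioo 0 k,
        (n (k - t) (n t x y) z - n (k - t) x (n t y z))
          = (ms (k - t) (ms t x y) z - ms (k - t) x (ms t y z)) := by
      intro t ht
      simp only [Finset.mem_Ioo] at ht
      simp only [hnk t (by omega) (by omega), hnk (k - t) (by omega) (by omega)]
    rw [Finset.sum_congr rfl this, wDef, Finset.sum_sub_distrib, Finset.sum_sub_distrib, neg_sub]
  have hPh0 : ∀ k, k < i → ∀ x y z : A, Ph n k x y z = 0 := by
    intro k hk x y z
    rcases Nat.eq_zero_or_pos k with h0 | h1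
    · subst h0
      simp [Ph, Finset.Nat.antidiagonal_zero, hn0, mul_assoc]
    · rw [Ph_eq n h1, hmid k h1 (by omega) x y z, hn0, hn0, hn0, hn0,
        hnk k h1 hk, hnk k h1 hk, hnk k h1 hk, hnk k h1 hk]
      rw [← hdef k h1 hk x y z]
      abel
  have hPhi : ∀ x y z : A, Ph n i x y z = wDef ms i x y z := by
    intro x y z
    rw [Ph_eq n hi, hmid i hi le_rfl x y z, hn0, hn0, hni, hni, hni, hni]
    simp [hn0]
  have pent := pentagon n hL hR i a₁ a₂ a₃ a₄
  rw [Finset.sum_add_distrib, Finset.sum_sub_distrib, Finset.sum_add_distrib,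
    Finset.sum_sub_distrib] at pent
  have c1 : ∑ pq ∈ Finset.HasAntidiagonal.antidiagonal i, n pq.1 (Ph n pq.2 a₁ a₂ a₃) a₄
      = wDef ms i a₁ a₂ a₃ * a₄ := by
    rw [Finset.sum_eq_single_of_mem (0, i) (by simp)]
    · rw [hn0, hPhi]
    · intro b hb hne
      simp only [Finset.HasAntidiagonal.mem_antidiagonal] at hb
      have : b.2 < i := by
        rcases Nat.lt_or_ge b.2 i with h | h
        · exact h
        · exfalso; apply hne; have : b.1 = 0 := by omega
          have h2 : b.2 = i := by omega
          exact Prod.ext this h2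
      rw [hPh0 b.2 this, hLzero]
  have c2 : ∑ pq ∈ Finset.HasAntidiagonal.antidiagonal i, Ph n pq.1 (n pq.2 a₁ a₂) a₃ a₄
      = wDef ms i (a₁ * a₂) a₃ a₄ := by
    rw [Finset.sum_eq_single_of_mem (i, 0) (by simp)]
    · rw [hn0, hPhi]
    · intro b hb hne
      simp only [Finset.HasAntidiagonal.mem_antidiagonal] at hb
      have : b.1 < i := by
        rcases Nat.lt_or_ge b.1 i with h | h
        · exact h
        · exfalso; apply hne
          exact Prod.ext (by omega) (by omega)
      rw [hPh0 b.1 this]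
  have c3 : ∑ pq ∈ Finset.HasAntidiagonal.antidiagonal i, Ph n pq.1 a₁ (n pq.2 a₂ a₃) a₄
      = wDef ms i a₁ (a₂ * a₃) a₄ := by
    rw [Finset.sum_eq_single_of_mem (i, 0) (by simp)]
    · rw [hn0, hPhi]
    · intro b hb hne
      simp only [Finset.HasAntidiagonal.mem_antidiagonal] at hb
      have : b.1 < i := by
        rcases Nat.lt_or_ge b.1 i with h | h
        · exact h
        · exfalso; apply hne
          exact Prod.ext (by omega) (by omega)
      rw [hPh0 b.1 this]
  have c4 : ∑ pq ∈ Finset.HasAntidiagonal.antidiagonal i, Ph n pq.1 a₁ a₂ (n pq.2 a₃ a₄)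
      = wDef ms i a₁ a₂ (a₃ * a₄) := by
    rw [Finset.sum_eq_single_of_mem (i, 0) (by simp)]
    · rw [hn0, hPhi]
    · intro b hb hne
      simp only [Finset.HasAntidiagonal.mem_antidiagonal] at hb
      have : b.1 < i := by
        rcases Nat.lt_or_ge b.1 i with h | h
        · exact h
        · exfalso; apply hne
          exact Prod.ext (by omega) (by omega)
      rw [hPh0 b.1 this]
  have hRzero : ∀ k a, n k a 0 = 0 := by
    intro k a
    simp only [hn, nnn]
    split_ifs with h1 h2
    · exact mul_zero a
    · exact ((hbil k (by omega) h2).2 a).map_zero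
    · rfl
  have c5 : ∑ pq ∈ Finset.HasAntidiagonal.antidiagonal i, n pq.1 a₁ (Ph n pq.2 a₂ a₃ a₄)
      = a₁ * wDef ms i a₂ a₃ a₄ := by
    rw [Finset.sum_eq_single_of_mem (0, i) (by simp)]
    · rw [hn0, hPhi]
    · intro b hb hne
      simp only [Finset.HasAntidiagonal.mem_antidiagonal] at hb
      have : b.2 < i := by
        rcases Nat.lt_or_ge b.2 i with h | h
        · exact h
        · exfalso; apply hne
          exact Prod.ext (by omega) (by omega)
      rw [hPh0 b.2 this, hRzero]
  rw [c1, c2, c3, c4, c5] at pent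
  rw [← pent]
  abel
end

section
/- Let D ≥ 1, l ∈ ℕ, j ∈ ℕ, and let k be a real number with k ≠ l − 2 and k ≠ −l − D. Then there exists a real polynomial p of degree exactly j such that for every harmonic polynomial h on ℝ^D homogeneous of degree l and every x ∈ ℝ^D with x ≠ 0: Δ( h(x)·|x|^{k+2−l}·p(log|x|) ) = h(x)·|x|^{k−l}·(log|x|)^j, where Δ denotes the Euclidean Laplacian Σ_{μ=1}^D ∂²/∂x_μ². -/
noncomputable section

/-- The Euclidean Laplacian `Δf = Σ_μ ∂²f/∂x_μ²` on `ℝ^D`. -/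
def lap {D : ℕ} (f : EuclideanSpace ℝ (Fin D) → ℝ) (x : EuclideanSpace ℝ (Fin D)) : ℝ :=
  ∑ μ : Fin D,
    fderiv ℝ (fun y => fderiv ℝ f y (EuclideanSpace.single μ 1)) x (EuclideanSpace.single μ 1)

/-- `h` is a harmonic polynomial on `ℝ^D`, homogeneous of degree `l`. -/
def IsHarmHom {D : ℕ} (l : ℕ) (h : EuclideanSpace ℝ (Fin D) → ℝ) : Prop :=
  (∃ p : MvPolynomial (Fin D) ℝ, ∀ x, h x = MvPolynomial.eval (fun μ => x μ) p) ∧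
  (∀ t : ℝ, 0 < t → ∀ x, h (t • x) = t ^ l * h x) ∧
  (∀ x, lap h x = 0)

open Polynomial Real


lemma solveT (α β : ℝ) (hα : α ≠ 0) :
    ∀ n : ℕ, ∀ q : ℝ[X], q.natDegree ≤ n →
      ∃ P : ℝ[X], C α * P + C β * P.derivative + P.derivative.derivative = q ∧
        P.degree = q.degree := by
  intro n
  induction n with
  | zero =>
    intro q hq
    obtain ⟨c, rfl⟩ : ∃ c, q = C c := ⟨q.coeff 0, eq_C_of_natDegree_le_zero hq⟩
    refine ⟨C (c / α), ?_, ?_⟩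
    · simp [← C_mul, mul_div_cancel₀ _ hα]
    · rcases eq_or_ne c 0 with rfl | h
      · simp
      · rw [degree_C (div_ne_zero h hα), degree_C h]
  | succ n ih =>
    intro q hq
    rcases eq_or_ne q 0 with rfl | hq0
    · exact ⟨0, by simp, by simp⟩
    set rem : ℝ[X] := C (β / α) * q.derivative + C (α⁻¹) * q.derivative.derivative with hremdef
    have hd1 : q.derivative.natDegree ≤ n := le_trans (natDegree_derivative_le q) (by omega)
    have hrem : rem.natDegree ≤ n := by
      apply le_trans (natDegree_add_le _ _)
      apply max_le
      · exact le_trans (natDegree_mul_le) (by simpa using hd1)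
      · refine le_trans (natDegree_mul_le) ?_
        simpa using le_trans (natDegree_derivative_le q.derivative)
          (le_trans (Nat.sub_le _ _) hd1)
    obtain ⟨P₁, hP₁, hdeg₁⟩ := ih rem hrem
    refine ⟨C α⁻¹ * q - P₁, ?_, ?_⟩
    · have : C α * (C α⁻¹ * q) = q := by
        rw [← mul_assoc, ← C_mul, mul_inv_cancel₀ hα, C_1, one_mul]
      simp only [derivative_sub, derivative_C_mul, mul_sub]
      have hβ : C β * (C α⁻¹ * q.derivative) = C (β / α) * q.derivative := by
        rw [← mul_assoc, ← C_mul]; ring_nf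
      rw [hβ]
      rw [hremdef] at hP₁
      linear_combination (norm := ring_nf) this - hP₁
    · have hCle : ∀ (c : ℝ) (s : ℝ[X]), (C c * s).degree ≤ s.degree := fun c s =>
        (degree_mul_le _ _).trans (by simpa using add_le_add_left (degree_C_le (a := c)) s.degree)
      have hlt : P₁.degree < (C α⁻¹ * q).degree := by
        rw [degree_C_mul (inv_ne_zero hα), hdeg₁, hremdef]
        refine lt_of_le_of_lt (degree_add_le _ _) (max_lt ?_ ?_)
        · exact lt_of_le_of_lt (hCle _ _) (degree_derivative_lt hq0)
        · exact lt_of_le_of_lt (hCle _ _)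
            (lt_of_le_of_lt degree_derivative_le (degree_derivative_lt hq0))
      rw [degree_sub_eq_left_of_degree_lt hlt, degree_C_mul (inv_ne_zero hα)]

lemma contDiff_mv_pi {D : ℕ} (p : MvPolynomial (Fin D) ℝ) :
    ContDiff ℝ (⊤ : ℕ∞) (fun x : Fin D → ℝ => MvPolynomial.eval x p) := by
  induction p using MvPolynomial.induction_on with
  | C a => simpa using contDiff_const
  | add p q hp hq => simpa using hp.add hq
  | mul_X p i hp =>
    simpa using hp.mul ((ContinuousLinearMap.proj i : (Fin D → ℝ) →L[ℝ] ℝ).contDiff)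

section Helpers

variable {D : ℕ}


local notation "E" => EuclideanSpace ℝ (Fin D)

lemma contDiff_mv (p : MvPolynomial (Fin D) ℝ) :
    ContDiff ℝ (⊤ : ℕ∞) (fun x : E => MvPolynomial.eval (fun μ => x μ) p) :=
  (contDiff_mv_pi p).comp (EuclideanSpace.equiv (Fin D) ℝ : E ≃L[ℝ] (Fin D → ℝ)).contDiff


lemma hasFDerivAt_norm' {x : E} (hx : x ≠ 0) :
    HasFDerivAt (fun y : E => ‖y‖) (‖x‖⁻¹ • innerSL ℝ x) x := by
  have h1 : HasFDerivAt (fun y : E => ‖y‖ ^ 2) (2 • innerSL ℝ x) x :=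
    (hasStrictFDerivAt_norm_sq x).hasFDerivAt
  have h2 := h1.sqrt (by simpa using hx)
  have heq : (fun y : E => Real.sqrt (‖y‖ ^ 2)) = fun y : E => ‖y‖ := by
    funext y; exact Real.sqrt_sq (norm_nonneg y)
  rw [heq] at h2
  refine h2.congr_fderiv (Eq.symm ?_)
  rw [Real.sqrt_sq (norm_nonneg x)]
  ext v
  have hnx : ‖x‖ ≠ 0 := norm_ne_zero_iff.mpr hx
  simp [smul_smul]
  field_simp

lemma hasDerivAt_phi (c : ℝ) (S : ℝ[X]) {r : ℝ} (hr : 0 < r) :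
    HasDerivAt (fun r : ℝ => r ^ c * S.eval (Real.log r))
      (r ^ (c - 1) * (C c * S + S.derivative).eval (Real.log r)) r := by
  have h1 : HasDerivAt (fun r : ℝ => r ^ c) (c * r ^ (c - 1)) r :=
    Real.hasDerivAt_rpow_const (Or.inl hr.ne')
  have h2 : HasDerivAt (fun r : ℝ => S.eval (Real.log r))
      (S.derivative.eval (Real.log r) * r⁻¹) r :=
    (S.hasDerivAt (Real.log r)).comp r (Real.hasDerivAt_log hr.ne')
  have := h1.mul h2
  refine this.congr_deriv (Eq.symm ?_)
  have hrc : r ^ c * r⁻¹ = r ^ (c - 1) := by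
    rw [← Real.rpow_neg_one r, ← Real.rpow_add hr]; ring_nf
  simp only [Polynomial.eval_add, Polynomial.eval_mul, Polynomial.eval_C]
  rw [← hrc]; ring

lemma hasFDerivAt_radial (c : ℝ) (S : ℝ[X]) {x : E} (hx : x ≠ 0) :
    HasFDerivAt (fun y : E => ‖y‖ ^ c * S.eval (Real.log ‖y‖))
      ((‖x‖ ^ (c - 2) * (C c * S + S.derivative).eval (Real.log ‖x‖)) • innerSL ℝ x) x := by
  have hr : 0 < ‖x‖ := norm_pos_iff.mpr hx
  have := (hasDerivAt_phi c S hr).comp_hasFDerivAt x (hasFDerivAt_norm' hx)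
  refine this.congr_fderiv (Eq.symm ?_)
  rw [smul_smul]
  congr 1
  rw [mul_comm _ ‖x‖⁻¹, ← mul_assoc, ← Real.rpow_neg_one ‖x‖, ← Real.rpow_add hr]
  ring_nf

lemma sum_single_smul (x : E) :
    ∑ μ : Fin D, x μ • EuclideanSpace.single μ (1 : ℝ) = x := by
  ext ν
  have h1 : (∑ μ : Fin D, x μ • EuclideanSpace.single μ (1 : ℝ)) ν
      = ∑ μ : Fin D, (x μ • EuclideanSpace.single μ (1 : ℝ)) ν :=
    by rw [WithLp.ofLp_sum]; exact Finset.sum_apply ν Finset.univ _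
  rw [h1]
  simp [EuclideanSpace.single_apply, eq_comm]

lemma euler {l : ℕ} {h : E → ℝ} (hsm : ContDiff ℝ (⊤ : ℕ∞) h)
    (hhom : ∀ t : ℝ, 0 < t → ∀ x, h (t • x) = t ^ l * h x) (x : E) :
    fderiv ℝ h x x = l * h x := by
  have hc : HasDerivAt (fun t : ℝ => t • x) x 1 := by
    simpa using (hasDerivAt_id (1 : ℝ)).smul_const x
  have hfd : HasFDerivAt h (fderiv ℝ h x) ((1 : ℝ) • x) := by
    rw [one_smul]
    exact (hsm.differentiable (by simp) x).hasFDerivAt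
  have h1 : HasDerivAt (fun t : ℝ => h (t • x)) (fderiv ℝ h x x) 1 := by
    exact hfd.comp_hasDerivAt 1 hc
  have h2 : HasDerivAt (fun t : ℝ => t ^ l * h x) ((l : ℝ) * h x) 1 := by
    simpa using (hasDerivAt_pow l (1 : ℝ)).mul_const (h x)
  have heq : (fun t : ℝ => h (t • x)) =ᶠ[nhds 1] fun t : ℝ => t ^ l * h x := by
    filter_upwards [eventually_gt_nhds (by norm_num : (0:ℝ) < 1)] with t ht
    exact hhom t ht x
  exact (h1.congr_of_eventuallyEq heq.symm).unique h2 ▸ rfl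

lemma euler_sum {l : ℕ} {h : E → ℝ} (hsm : ContDiff ℝ (⊤ : ℕ∞) h)
    (hhom : ∀ t : ℝ, 0 < t → ∀ x, h (t • x) = t ^ l * h x) (x : E) :
    ∑ μ : Fin D, fderiv ℝ h x (EuclideanSpace.single μ 1) * x μ = l * h x := by
  have h1 := euler hsm hhom x
  have h2 : (fderiv ℝ h x) x
      = ∑ μ : Fin D, fderiv ℝ h x (EuclideanSpace.single μ 1) * x μ := by
    have h3 : (fderiv ℝ h x) x
        = (fderiv ℝ h x) (∑ μ : Fin D, x μ • EuclideanSpace.single μ (1:ℝ)) := by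
      rw [sum_single_smul]
    rw [h3, map_sum]
    exact Finset.sum_congr rfl fun μ _ => by rw [map_smul]; simp [mul_comm]
  rw [← h2, h1]

lemma sum_sq_eq (x : E) : ∑ μ : Fin D, x μ * x μ = ‖x‖ ^ (2:ℕ) := by
  rw [← real_inner_self_eq_norm_sq]
  simp only [PiLp.inner_apply, RCLike.inner_apply, conj_trivial]

lemma contDiff_dh {h : E → ℝ} (hsm : ContDiff ℝ (⊤ : ℕ∞) h) (v : E) :
    ContDiff ℝ (⊤ : ℕ∞) (fun y : E => fderiv ℝ h y v) := by
  exact (hsm.fderiv_right (by exact_mod_cast le_top)).clm_apply contDiff_const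

lemma lap_formula {l : ℕ} {h : E → ℝ} (hsm : ContDiff ℝ (⊤ : ℕ∞) h)
    (hhom : ∀ t : ℝ, 0 < t → ∀ x, h (t • x) = t ^ l * h x)
    (a : ℝ) (P : ℝ[X]) {x : E} (hx : x ≠ 0) :
    lap (fun y => h y * ‖y‖ ^ a * P.eval (Real.log ‖y‖)) x
      = lap h x * (‖x‖ ^ a * P.eval (Real.log ‖x‖))
        + h x * (‖x‖ ^ (a - 2) *
          ((C ((a : ℝ) + 2 * l + D - 2) * (C a * P + P.derivative)
            + (C a * P + P.derivative).derivative).eval (Real.log ‖x‖))) := by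
  have hr : 0 < ‖x‖ := norm_pos_iff.mpr hx
  have hdiff : Differentiable ℝ h := hsm.differentiable (by simp)
  set Q : ℝ[X] := C a * P + P.derivative with hQdef
  set F : E → ℝ := fun y => h y * ‖y‖ ^ a * P.eval (Real.log ‖y‖) with hFdef
  have hF : ∀ y : E, y ≠ 0 → HasFDerivAt F
      ((‖y‖ ^ a * P.eval (Real.log ‖y‖)) • fderiv ℝ h y
        + (h y * (‖y‖ ^ (a - 2) * Q.eval (Real.log ‖y‖))) • innerSL ℝ y) y := by
    intro y hy
    have h1 := ((hdiff y).hasFDerivAt).mul (hasFDerivAt_radial a P hy)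
    simp only [Pi.mul_def, ← mul_assoc] at h1
    refine h1.congr_fderiv (Eq.symm ?_)
    rw [add_comm]
    congr 1
    rw [smul_smul]
  have key : ∀ μ : Fin D,
      fderiv ℝ (fun y => fderiv ℝ F y (EuclideanSpace.single μ 1)) x
          (EuclideanSpace.single μ 1)
        = (‖x‖ ^ a * P.eval (Real.log ‖x‖))
            * fderiv ℝ (fun y => fderiv ℝ h y (EuclideanSpace.single μ 1)) x
                (EuclideanSpace.single μ 1)
          + 2 * (‖x‖ ^ (a - 2) * Q.eval (Real.log ‖x‖))
            * (fderiv ℝ h x (EuclideanSpace.single μ 1) * x μ)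
          + h x * (‖x‖ ^ (a - 2) * Q.eval (Real.log ‖x‖))
          + h x * (‖x‖ ^ (a - 2 - 2)
              * (C (a - 2) * Q + Q.derivative).eval (Real.log ‖x‖)) * (x μ * x μ) := by
    intro μ
    have hev : (fun y => fderiv ℝ F y (EuclideanSpace.single μ 1)) =ᶠ[nhds x]
        (fun y => (‖y‖ ^ a * P.eval (Real.log ‖y‖))
            * fderiv ℝ h y (EuclideanSpace.single μ 1)
          + (h y * (‖y‖ ^ (a - 2) * Q.eval (Real.log ‖y‖))) * (y μ)) := by
      filter_upwards [IsOpen.mem_nhds isOpen_compl_singleton hx] with y hy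
      rw [(hF y hy).fderiv]
      simp only [ContinuousLinearMap.add_apply, ContinuousLinearMap.coe_smul',
        Pi.smul_apply, smul_eq_mul, innerSL_apply_apply]
      rw [EuclideanSpace.inner_single_right]
      simp
    rw [hev.fderiv_eq]
    have hA1 := hasFDerivAt_radial a P hx
    have hA2 : HasFDerivAt (fun y : E => fderiv ℝ h y (EuclideanSpace.single μ 1))
        (fderiv ℝ (fun y : E => fderiv ℝ h y (EuclideanSpace.single μ 1)) x) x :=
      (((contDiff_dh hsm (EuclideanSpace.single μ 1)).differentiable
        (by simp)) x).hasFDerivAt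
    have hA3 := (hdiff x).hasFDerivAt
    have hA4 := hasFDerivAt_radial (a - 2) Q hx
    have hA5 : HasFDerivAt (fun y : E => y μ)
        (EuclideanSpace.proj μ : E →L[ℝ] ℝ) x := (EuclideanSpace.proj (𝕜 := ℝ) μ).hasFDerivAt
    have hbig := (hA1.mul hA2).add ((hA3.mul hA4).mul hA5)
    simp only [Pi.mul_def, Pi.add_def] at hbig
    rw [hbig.fderiv]
    simp only [ContinuousLinearMap.add_apply, ContinuousLinearMap.coe_smul',
      Pi.smul_apply, smul_eq_mul, innerSL_apply_apply, ContinuousLinearMap.smul_apply]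
    rw [EuclideanSpace.inner_single_right]
    have hproj : (EuclideanSpace.proj (𝕜 := ℝ) μ) (EuclideanSpace.single μ (1:ℝ)) = 1 := by
      simp
    rw [hproj]
    simp only [starRingEnd_apply, star_trivial]
    ring
  unfold lap
  rw [Finset.sum_congr rfl fun μ _ => key μ]
  rw [Finset.sum_add_distrib, Finset.sum_add_distrib, Finset.sum_add_distrib]
  have hsum3 : ∑ _μ : Fin D, h x * (‖x‖ ^ (a - 2) * Q.eval (Real.log ‖x‖))
      = (D : ℝ) * (h x * (‖x‖ ^ (a - 2) * Q.eval (Real.log ‖x‖))) := by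
    rw [Finset.sum_const, Finset.card_univ, Fintype.card_fin, nsmul_eq_mul]
  rw [hsum3]
  rw [← Finset.mul_sum, ← Finset.mul_sum, ← Finset.mul_sum]
  rw [euler_sum hsm hhom x, sum_sq_eq x]
  have hpow : (‖x‖ : ℝ) ^ (2:ℕ) = ‖x‖ ^ ((2:ℕ) : ℝ) := (Real.rpow_natCast _ 2).symm
  have hcomb : ‖x‖ ^ (a - 2 - 2) * ‖x‖ ^ (2:ℕ) = ‖x‖ ^ (a - 2) := by
    rw [hpow, ← Real.rpow_add hr]
    norm_num
  have hQ2 : ((C ((a : ℝ) + 2 * l + D - 2) * Q + Q.derivative).eval (Real.log ‖x‖))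
      = (2 * l + D) * Q.eval (Real.log ‖x‖)
        + ((C (a - 2) * Q + Q.derivative).eval (Real.log ‖x‖)) := by
    simp only [Polynomial.eval_add, Polynomial.eval_mul, Polynomial.eval_C]
    ring
  rw [hQ2, ← hcomb]
  ring

end Helpers

/-- non-resonant radial inverse Laplacian: for `k ≠ l − 2` and `k ≠ −l − D`
there is a polynomial `p` of degree exactly `j` such that
`Δ(h(x)·|x|^{k+2−l}·p(log|x|)) = h(x)·|x|^{k−l}·(log|x|)^j` for every harmonic polynomial
`h` homogeneous of degree `l` and every `x ≠ 0`. -/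
theorem stmt11 {D : ℕ} (hD : 1 ≤ D) (l j : ℕ) (k : ℝ)
    (hk1 : k ≠ (l : ℝ) - 2) (hk2 : k ≠ -(l : ℝ) - (D : ℝ)) :
    ∃ p : Polynomial ℝ, p.degree = (j : ℕ) ∧
      ∀ h : EuclideanSpace ℝ (Fin D) → ℝ, IsHarmHom l h →
        ∀ x : EuclideanSpace ℝ (Fin D), x ≠ 0 →
          lap (fun y => h y * ‖y‖ ^ (k + 2 - (l : ℝ)) * Polynomial.eval (Real.log ‖y‖) p) x
            = h x * ‖x‖ ^ (k - (l : ℝ)) * Real.log ‖x‖ ^ j := by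
  set a : ℝ := k + 2 - (l : ℝ) with ha
  have ha0 : a ≠ 0 := by
    intro h0
    apply hk1
    rw [ha] at h0
    linarith
  have hb0 : a + 2 * (l : ℝ) + (D : ℝ) - 2 ≠ 0 := by
    intro h0
    apply hk2
    rw [ha] at h0
    linarith
  have hα : a * (a + 2 * (l : ℝ) + (D : ℝ) - 2) ≠ 0 := mul_ne_zero ha0 hb0
  obtain ⟨P, hTP, hdegP⟩ := solveT (a * (a + 2 * (l : ℝ) + (D : ℝ) - 2))
    (2 * a + 2 * (l : ℝ) + (D : ℝ) - 2) hα j (X ^ j) (by simp)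
  refine ⟨P, by rw [hdegP, degree_X_pow], ?_⟩
  intro h hh x hx
  obtain ⟨⟨p, hp⟩, hhom, hharm⟩ := hh
  have hsm : ContDiff ℝ (⊤ : ℕ∞) h := by
    have : h = fun x : EuclideanSpace ℝ (Fin D) => MvPolynomial.eval (fun μ => x μ) p :=
      funext hp
    rw [this]
    exact contDiff_mv p
  rw [lap_formula hsm hhom a P hx, hharm x, zero_mul, zero_add]
  have hexp : C ((a : ℝ) + 2 * l + D - 2) * (C a * P + P.derivative)
      + (C a * P + P.derivative).derivative = X ^ j := by
    have e1 : ((a : ℝ) + 2 * l + D - 2) * a = a * (a + 2 * (l : ℝ) + (D : ℝ) - 2) :=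
      mul_comm _ _
    have e2 : ((a : ℝ) + 2 * l + D - 2) + a = 2 * a + 2 * (l : ℝ) + (D : ℝ) - 2 := by ring
    calc C ((a : ℝ) + 2 * l + D - 2) * (C a * P + P.derivative)
          + (C a * P + P.derivative).derivative
        = C (((a : ℝ) + 2 * l + D - 2) * a) * P
            + C (((a : ℝ) + 2 * l + D - 2) + a) * P.derivative
            + P.derivative.derivative := by
          simp only [derivative_add, derivative_C_mul, C_mul, C_add]
          ring
      _ = X ^ j := by rw [e1, e2, hTP]
  rw [hexp]
  have haa : a - 2 = k - (l : ℝ) := by rw [ha]; ring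
  rw [haa]
  simp only [Polynomial.eval_pow, Polynomial.eval_X]
  ring
end
end
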